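/- arXiv:2602.09436 — 3 statements merged into one kernel-verified Lean document; each statement's English description precedes it below -/
import Mathlib

section
/- Assume (H1), (H̃2), (H3). If λ ∈ ℝ and u ∈ 𝒳₁^{++} satisfy L[u](x,t) = λ u(x,t) for all (x,t) ∈ cl(Ω)×ℝ, then λ_p(L) = λ and λ_p'(L) = λ. -/
open MeasureTheory Filter Topology

noncomputable section

/-- Membership in `𝒳₁` : continuous on `cl(Ω) × ℝ`, `C¹` in `t`, 1-periodic in `t`. -/
def MemX1 {N l : ℕ} (Ω : Set (EuclideanSpace ℝ (Fin N)))
    (φ : EuclideanSpace ℝ (Fin N) → ℝ → Fin l → ℝ) : Prop :=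
  (∀ i, ContinuousOn (fun p : EuclideanSpace ℝ (Fin N) × ℝ => φ p.1 p.2 i)
      (closure Ω ×ˢ (Set.univ : Set ℝ))) ∧
  (∀ x ∈ closure Ω, ∀ i, ContDiff ℝ 1 fun t => φ x t i) ∧
  ∀ x ∈ closure Ω, ∀ (t : ℝ) (i : Fin l), φ x (t + 1) i = φ x t i

/-- Membership in `𝒳₁^{++}` : member of `𝒳₁` which is componentwise strictly positive. -/
def MemX1pp {N l : ℕ} (Ω : Set (EuclideanSpace ℝ (Fin N)))
    (φ : EuclideanSpace ℝ (Fin N) → ℝ → Fin l → ℝ) : Prop :=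
  MemX1 Ω φ ∧ ∀ x ∈ closure Ω, ∀ (t : ℝ) (i : Fin l), 0 < φ x t i

/-- Hypothesis (H2) for the coupling matrix `A`. -/
def HypH2 {N l : ℕ} (Ω : Set (EuclideanSpace ℝ (Fin N)))
    (A : EuclideanSpace ℝ (Fin N) → ℝ → Fin l → Fin l → ℝ) : Prop :=
  (∀ i j, ContinuousOn (fun p : EuclideanSpace ℝ (Fin N) × ℝ => A p.1 p.2 i j)
      (closure Ω ×ˢ (Set.univ : Set ℝ))) ∧
  (∀ x ∈ closure Ω, ∀ (t : ℝ) (i j : Fin l), i ≠ j → 0 ≤ A x t i j) ∧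
  ∀ x ∈ closure Ω, ∀ (t : ℝ) (i j : Fin l), A x (t + 1) i j = A x t i j

/-- A matrix-valued function on `cl(Ω) × ℝ` is irreducible. -/
def Irred {N l : ℕ} (Ω : Set (EuclideanSpace ℝ (Fin N)))
    (C : EuclideanSpace ℝ (Fin N) → ℝ → Fin l → Fin l → ℝ) : Prop :=
  ∀ x ∈ closure Ω, ∀ (t : ℝ) (I : Finset (Fin l)), I.Nonempty → I ≠ Finset.univ →
    ∃ i ∈ I, ∃ j, j ∉ I ∧ C x t i j ≠ 0

/-- The nonlocal time-periodic operator `L = L_{Ω,k,A}`. -/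
def Lop {N l : ℕ} (Ω : Set (EuclideanSpace ℝ (Fin N))) (τ : ℝ)
    (D A : EuclideanSpace ℝ (Fin N) → ℝ → Fin l → Fin l → ℝ)
    (k : Fin l → EuclideanSpace ℝ (Fin N) → EuclideanSpace ℝ (Fin N) → ℝ → ℝ)
    (φ : EuclideanSpace ℝ (Fin N) → ℝ → Fin l → ℝ)
    (x : EuclideanSpace ℝ (Fin N)) (t : ℝ) (i : Fin l) : ℝ :=
  -τ * deriv (fun s => φ x s i) t
    + ∑ j, D x t i j * ∫ y in Ω, k j x y t * φ y t j
    + ∑ j, A x t i j * φ x t j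

/-- The generalized principal eigenvalue `λ_p(L)`. -/
def lamP {N l : ℕ} (Ω : Set (EuclideanSpace ℝ (Fin N))) (τ : ℝ)
    (D A : EuclideanSpace ℝ (Fin N) → ℝ → Fin l → Fin l → ℝ)
    (k : Fin l → EuclideanSpace ℝ (Fin N) → EuclideanSpace ℝ (Fin N) → ℝ → ℝ) : ℝ :=
  sSup {lam : ℝ | ∃ φ, MemX1pp Ω φ ∧
    ∀ x ∈ closure Ω, ∀ (t : ℝ) (i : Fin l), lam * φ x t i ≤ Lop Ω τ D A k φ x t i}

/-- The generalized principal eigenvalue `λ_p'(L)`. -/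
def lamP' {N l : ℕ} (Ω : Set (EuclideanSpace ℝ (Fin N))) (τ : ℝ)
    (D A : EuclideanSpace ℝ (Fin N) → ℝ → Fin l → Fin l → ℝ)
    (k : Fin l → EuclideanSpace ℝ (Fin N) → EuclideanSpace ℝ (Fin N) → ℝ → ℝ) : ℝ :=
  sInf {lam : ℝ | ∃ φ, MemX1pp Ω φ ∧
    ∀ x ∈ closure Ω, ∀ (t : ℝ) (i : Fin l), Lop Ω τ D A k φ x t i ≤ lam * φ x t i}

/-- Hypothesis (H1) for the dispersal matrix `D`. -/
def HypH1 {N l : ℕ} (Ω : Set (EuclideanSpace ℝ (Fin N)))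
    (D : EuclideanSpace ℝ (Fin N) → ℝ → Fin l → Fin l → ℝ) : Prop :=
  (∀ i j, ContinuousOn (fun p : EuclideanSpace ℝ (Fin N) × ℝ => D p.1 p.2 i j)
      (closure Ω ×ˢ (Set.univ : Set ℝ))) ∧
  (∀ x ∈ closure Ω, ∀ (t : ℝ) (i j : Fin l), 0 ≤ D x t i j) ∧
  (∀ x ∈ closure Ω, ∀ (t : ℝ) (i : Fin l), 0 < D x t i i) ∧
  ∀ x ∈ closure Ω, ∀ (t : ℝ) (i j : Fin l), D x (t + 1) i j = D x t i j

/-- Hypothesis (H3) for the kernels `k_i`. -/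
def HypH3 {N l : ℕ} (k : Fin l → EuclideanSpace ℝ (Fin N) → EuclideanSpace ℝ (Fin N) → ℝ → ℝ) : Prop :=
  (∀ i, Continuous fun p : EuclideanSpace ℝ (Fin N) × EuclideanSpace ℝ (Fin N) × ℝ =>
      k i p.1 p.2.1 p.2.2) ∧
  (∀ i x y t, 0 ≤ k i x y t) ∧
  (∀ i x t, 0 < k i x x t) ∧
  ∀ i x y t, k i x y (t + 1) = k i x y t


/-- Key comparison lemma: a supersolution eigenvalue bound `μ` is dominated by a
subsolution eigenvalue bound `ν`. -/
lemma key_compare {N l : ℕ} (hl : 1 ≤ l)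
    {Ω : Set (EuclideanSpace ℝ (Fin N))} (hΩne : Ω.Nonempty) (hΩo : IsOpen Ω)
    (hΩb : Bornology.IsBounded Ω) {τ : ℝ}
    {D A : EuclideanSpace ℝ (Fin N) → ℝ → Fin l → Fin l → ℝ}
    {k : Fin l → EuclideanSpace ℝ (Fin N) → EuclideanSpace ℝ (Fin N) → ℝ → ℝ}
    (hD0 : ∀ x ∈ closure Ω, ∀ (t : ℝ) (i j : Fin l), 0 ≤ D x t i j)
    (hA0 : ∀ x ∈ closure Ω, ∀ (t : ℝ) (i j : Fin l), i ≠ j → 0 ≤ A x t i j)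
    (hkc : ∀ i, Continuous fun p : EuclideanSpace ℝ (Fin N) × EuclideanSpace ℝ (Fin N) × ℝ =>
      k i p.1 p.2.1 p.2.2)
    (hk0 : ∀ i x y t, 0 ≤ k i x y t)
    {μ ν : ℝ} {φ ψ : EuclideanSpace ℝ (Fin N) → ℝ → Fin l → ℝ}
    (hφ : MemX1pp Ω φ) (hψ : MemX1pp Ω ψ)
    (hφineq : ∀ x ∈ closure Ω, ∀ (t : ℝ) (i : Fin l), μ * φ x t i ≤ Lop Ω τ D A k φ x t i)
    (hψineq : ∀ x ∈ closure Ω, ∀ (t : ℝ) (i : Fin l), Lop Ω τ D A k ψ x t i ≤ ν * ψ x t i) :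
    μ ≤ ν := by
  haveI : NeZero l := ⟨by omega⟩
  obtain ⟨⟨hφc, hφd, hφper⟩, hφpos⟩ := hφ
  obtain ⟨⟨hψc, hψd, hψper⟩, hψpos⟩ := hψ
  set K : Set (EuclideanSpace ℝ (Fin N) × ℝ) := closure Ω ×ˢ Set.Icc (0:ℝ) 1 with hK
  have hKcl : IsCompact (closure Ω) := hΩb.isCompact_closure
  have hKc : IsCompact K := hKcl.prod isCompact_Icc
  have hKne : K.Nonempty := ⟨(hΩne.some, 0), subset_closure hΩne.some_mem, by norm_num⟩
  set g : Fin l → EuclideanSpace ℝ (Fin N) × ℝ → ℝ :=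
    fun i p => ψ p.1 p.2 i / φ p.1 p.2 i with hg
  have hKsub : K ⊆ closure Ω ×ˢ (Set.univ : Set ℝ) := fun p hp => ⟨hp.1, trivial⟩
  have hgc : ∀ i, ContinuousOn (g i) K := fun i =>
    ((hψc i).mono hKsub).div ((hφc i).mono hKsub)
      (fun p hp => (hφpos p.1 hp.1 p.2 i).ne')
  choose p hpK hpmin using fun i => hKc.exists_isMinOn hKne (hgc i)
  obtain ⟨i₀, -, hi₀⟩ := Finset.exists_min_image Finset.univ (fun i => g i (p i))
    ⟨⟨0, by omega⟩, Finset.mem_univ _⟩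
  set x₀ := (p i₀).1 with hx₀def
  set t₀ := (p i₀).2 with ht₀def
  have hx₀ : x₀ ∈ closure Ω := (hpK i₀).1
  set γ : ℝ := g i₀ (p i₀) with hγdef
  have hφp0 : 0 < φ x₀ t₀ i₀ := hφpos x₀ hx₀ t₀ i₀
  have hγpos : 0 < γ := div_pos (hψpos x₀ hx₀ t₀ i₀) hφp0
  -- periodic reduction
  have hfract : ∀ (f : ℝ → ℝ), (∀ t, f (t + 1) = f t) → ∀ t, f (Int.fract t) = f t := by
    intro f hf t
    have hper : Function.Periodic f 1 := hf
    have := hper.sub_int_mul_eq (x := t) ⌊t⌋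
    rwa [mul_one, Int.self_sub_floor] at this
  have hlow : ∀ x ∈ closure Ω, ∀ (t : ℝ) (i : Fin l), γ * φ x t i ≤ ψ x t i := by
    intro x hx t i
    have hsK : (x, Int.fract t) ∈ K :=
      ⟨hx, ⟨Int.fract_nonneg t, (Int.fract_lt_one t).le⟩⟩
    have h1 : γ ≤ g i (x, Int.fract t) :=
      le_trans (hi₀ i (Finset.mem_univ i)) (hpmin i hsK)
    have hφs : 0 < φ x (Int.fract t) i := hφpos x hx _ i
    have h2 : γ * φ x (Int.fract t) i ≤ ψ x (Int.fract t) i :=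
      (le_div_iff₀ hφs).mp h1
    have eφ := hfract (fun s => φ x s i) (fun s => hφper x hx s i) t
    have eψ := hfract (fun s => ψ x s i) (fun s => hψper x hx s i) t
    simpa [eφ, eψ] using h2
  have heq : ψ x₀ t₀ i₀ = γ * φ x₀ t₀ i₀ := by
    rw [hγdef]
    exact (div_mul_cancel₀ (ψ x₀ t₀ i₀) hφp0.ne').symm
  -- derivative equality at the touching point
  have hψdiff : DifferentiableAt ℝ (fun t => ψ x₀ t i₀) t₀ :=
    ((hψd x₀ hx₀ i₀).differentiable one_ne_zero).differentiableAt
  have hφdiff : DifferentiableAt ℝ (fun t => φ x₀ t i₀) t₀ :=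
    ((hφd x₀ hx₀ i₀).differentiable one_ne_zero).differentiableAt
  have hderiv : deriv (fun t => ψ x₀ t i₀) t₀ = γ * deriv (fun t => φ x₀ t i₀) t₀ := by
    have hmin : IsLocalMin (fun t => ψ x₀ t i₀ - γ * φ x₀ t i₀) t₀ := by
      apply Filter.Eventually.of_forall
      intro t
      have h1 := hlow x₀ hx₀ t i₀
      simp only [heq]
      linarith
    have h0 := hmin.deriv_eq_zero
    rw [deriv_fun_sub hψdiff (hφdiff.const_mul γ), deriv_const_mul γ hφdiff] at h0
    linarith
  clear hi₀ hpmin hgc hγdef hg hpK hKne hKc hKsub hK hfract hx₀def ht₀def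
  clear_value γ g x₀ t₀ K
  clear g K
  -- the constant (in y) part of the integrand compares
  have hA2 : γ * ∑ m, A x₀ t₀ i₀ m * φ x₀ t₀ m ≤ ∑ m, A x₀ t₀ i₀ m * ψ x₀ t₀ m := by
    rw [Finset.mul_sum]
    refine Finset.sum_le_sum fun j _ => ?_
    rcases eq_or_ne i₀ j with rfl | hne
    · rw [heq]; ring_nf; exact le_rfl
    · have hA := hA0 x₀ hx₀ t₀ i₀ j hne
      have := hlow x₀ hx₀ t₀ j
      nlinarith
  -- integrability of the integrand
  have hInt : ∀ (w : EuclideanSpace ℝ (Fin N) → ℝ → Fin l → ℝ),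
      (∀ i, ContinuousOn (fun p : EuclideanSpace ℝ (Fin N) × ℝ => w p.1 p.2 i)
        (closure Ω ×ˢ (Set.univ : Set ℝ))) →
      ∀ j, IntegrableOn
        (fun y => k j x₀ y t₀ * w y t₀ j + ∑ m, A x₀ t₀ i₀ m * w x₀ t₀ m) Ω volume := by
    intro w hw j
    have hck : ContinuousOn (fun y => k j x₀ y t₀) (closure Ω) :=
      ((hkc j).comp (continuous_const.prodMk
        (continuous_id.prodMk continuous_const))).continuousOn
    have hcw : ContinuousOn (fun y => w y t₀ j) (closure Ω) :=
      (hw j).comp (continuous_id.prodMk continuous_const).continuousOn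
        (fun y hy => ⟨hy, trivial⟩)
    exact (((hck.mul hcw).add continuousOn_const).integrableOn_compact hKcl).mono_set
      subset_closure
  have hIφ := hInt φ hφc
  have hIψ := hInt ψ hψc
  -- integral comparison
  have hint : ∀ j,
      γ * ∫ y in Ω, (k j x₀ y t₀ * φ y t₀ j + ∑ m, A x₀ t₀ i₀ m * φ x₀ t₀ m)
      ≤ ∫ y in Ω, (k j x₀ y t₀ * ψ y t₀ j + ∑ m, A x₀ t₀ i₀ m * ψ x₀ t₀ m) := by
    intro j
    have h1 : γ * ∫ y in Ω, (k j x₀ y t₀ * φ y t₀ j + ∑ m, A x₀ t₀ i₀ m * φ x₀ t₀ m)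
        = ∫ y in Ω, γ * (k j x₀ y t₀ * φ y t₀ j + ∑ m, A x₀ t₀ i₀ m * φ x₀ t₀ m) := by
      rw [← smul_eq_mul, ← integral_smul]
      simp [smul_eq_mul]
    rw [h1]
    apply setIntegral_mono_on ((hIφ j).const_mul γ) (hIψ j) hΩo.measurableSet
    intro y hy
    have hyc : y ∈ closure Ω := subset_closure hy
    have hky := mul_le_mul_of_nonneg_left (hlow y hyc t₀ j) (hk0 j x₀ y t₀)
    nlinarith [hA2]
  -- main comparison at the touching point
  have h1 := hφineq x₀ hx₀ t₀ i₀
  have h2 := hψineq x₀ hx₀ t₀ i₀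
  unfold Lop at h1 h2
  have hmid : γ * (-τ * deriv (fun s => φ x₀ s i₀) t₀
        + ∑ j, D x₀ t₀ i₀ j *
          ∫ y in Ω, (k j x₀ y t₀ * φ y t₀ j + ∑ m, A x₀ t₀ i₀ m * φ x₀ t₀ m))
      ≤ -τ * deriv (fun s => ψ x₀ s i₀) t₀
        + ∑ j, D x₀ t₀ i₀ j *
          ∫ y in Ω, (k j x₀ y t₀ * ψ y t₀ j + ∑ m, A x₀ t₀ i₀ m * ψ x₀ t₀ m) := by
    rw [hderiv]
    have e1 : γ * (-τ * deriv (fun s => φ x₀ s i₀) t₀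
          + ∑ j, D x₀ t₀ i₀ j *
            ∫ y in Ω, (k j x₀ y t₀ * φ y t₀ j + ∑ m, A x₀ t₀ i₀ m * φ x₀ t₀ m))
        = -τ * (γ * deriv (fun s => φ x₀ s i₀) t₀)
          + γ * ∑ j, D x₀ t₀ i₀ j *
            ∫ y in Ω, (k j x₀ y t₀ * φ y t₀ j + ∑ m, A x₀ t₀ i₀ m * φ x₀ t₀ m) := by
      ring
    refine le_trans (le_of_eq e1) (add_le_add le_rfl ?_)
    rw [Finset.mul_sum]
    refine Finset.sum_le_sum fun j _ => ?_
    have hD := hD0 x₀ hx₀ t₀ i₀ j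
    nlinarith [hint j]
  have hkey : μ * (γ * φ x₀ t₀ i₀) ≤ ν * (γ * φ x₀ t₀ i₀) := by
    have hγφ := mul_le_mul_of_nonneg_left h1 hγpos.le
    have := le_trans (le_trans hγφ hmid) h2
    rw [heq] at this
    linarith
  exact le_of_mul_le_mul_right (by linarith) (mul_pos hγpos hφp0)

theorem stmt3 {N l : ℕ} (hN : 1 ≤ N) (hl : 1 ≤ l)
    (Ω : Set (EuclideanSpace ℝ (Fin N))) (hΩne : Ω.Nonempty) (hΩo : IsOpen Ω)
    (hΩb : Bornology.IsBounded Ω) (τ : ℝ) (hτ : 0 < τ)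
    (D A : EuclideanSpace ℝ (Fin N) → ℝ → Fin l → Fin l → ℝ)
    (k : Fin l → EuclideanSpace ℝ (Fin N) → EuclideanSpace ℝ (Fin N) → ℝ → ℝ)
    (hH1 : HypH1 Ω D) (hH2 : HypH2 Ω A) (hH3 : HypH3 k)
    (hirr : Irred Ω D ∨ Irred Ω A)
    (lam : ℝ) (u : EuclideanSpace ℝ (Fin N) → ℝ → Fin l → ℝ)
    (hu : MemX1pp Ω u)
    (hueq : ∀ x ∈ closure Ω, ∀ (t : ℝ) (i : Fin l), Lop Ω τ D A k u x t i = lam * u x t i) :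
    lamP Ω τ D A k = lam ∧ lamP' Ω τ D A k = lam :=  by
  have hD0 := hH1.2.1
  have hA0 := hH2.2.1
  have hkc := hH3.1
  have hk0 := hH3.2.1
  have huLle : ∀ x ∈ closure Ω, ∀ (t : ℝ) (i : Fin l),
      Lop Ω τ D A k u x t i ≤ lam * u x t i := fun x hx t i => (hueq x hx t i).le
  have huLge : ∀ x ∈ closure Ω, ∀ (t : ℝ) (i : Fin l),
      lam * u x t i ≤ Lop Ω τ D A k u x t i := fun x hx t i => (hueq x hx t i).ge
  have hmemS : lam ∈ {lam' : ℝ | ∃ φ, MemX1pp Ω φ ∧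
      ∀ x ∈ closure Ω, ∀ (t : ℝ) (i : Fin l), lam' * φ x t i ≤ Lop Ω τ D A k φ x t i} :=
    ⟨u, hu, huLge⟩
  have hmemS' : lam ∈ {lam' : ℝ | ∃ φ, MemX1pp Ω φ ∧
      ∀ x ∈ closure Ω, ∀ (t : ℝ) (i : Fin l), Lop Ω τ D A k φ x t i ≤ lam' * φ x t i} :=
    ⟨u, hu, huLle⟩
  have hub : ∀ b ∈ {lam' : ℝ | ∃ φ, MemX1pp Ω φ ∧
      ∀ x ∈ closure Ω, ∀ (t : ℝ) (i : Fin l), lam' * φ x t i ≤ Lop Ω τ D A k φ x t i},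
      b ≤ lam := by
    rintro b ⟨φ, hφ, hφineq⟩
    exact key_compare hl hΩne hΩo hΩb hD0 hA0 hkc hk0 hφ hu hφineq huLle
  have hlb : ∀ b ∈ {lam' : ℝ | ∃ φ, MemX1pp Ω φ ∧
      ∀ x ∈ closure Ω, ∀ (t : ℝ) (i : Fin l), Lop Ω τ D A k φ x t i ≤ lam' * φ x t i},
      lam ≤ b := by
    rintro b ⟨φ, hφ, hφineq⟩
    exact key_compare hl hΩne hΩo hΩb hD0 hA0 hkc hk0 hu hφ huLge hφineq
  constructor
  · exact le_antisymm (csSup_le ⟨lam, hmemS⟩ hub) (le_csSup ⟨lam, hub⟩ hmemS)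
  · exact le_antisymm (csInf_le ⟨lam, hlb⟩ hmemS') (le_csInf ⟨lam, hmemS'⟩ hlb)
end
end

section
/- Assume (H1), (H2), (H3). For every ε > 0 there exists δ > 0 such that for every matrix-valued function Ã = (ã_{ij}) on cl(Ω)×ℝ satisfying (H2) and sup_{i,j,x,t} |ã_{ij}(x,t) − a_{ij}(x,t)| ≤ δ, one has λ_p(L_{Ω,k,Ã}) ≥ λ_p(L_{Ω,k,A}) − ε and λ_p'(L_{Ω,k,Ã}) ≤ λ_p'(L_{Ω,k,A}) + ε. -/
open MeasureTheory Filter Topology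

noncomputable section

namespace Stmt8Aux

open MeasureTheory Set

variable {N l : ℕ}

local notation "X" => EuclideanSpace ℝ (Fin N)

lemma fract_mem_Icc (t : ℝ) : Int.fract t ∈ Set.Icc (0:ℝ) 1 :=
  ⟨Int.fract_nonneg t, (Int.fract_lt_one t).le⟩

lemma periodic_fract {f : ℝ → ℝ} (h : ∀ t, f (t + 1) = f t) (t : ℝ) :
    f t = f (Int.fract t) := by
  have hp : Function.Periodic f 1 := h
  have h2 := hp.sub_int_mul_eq (x := t) (n := ⌊t⌋)
  simp only [mul_one] at h2
  rw [Int.fract]; exact h2.symm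

lemma bound_per {Ω : Set X} (hK : IsCompact (closure Ω))
    {g : X × ℝ → ℝ} (hc : ContinuousOn g (closure Ω ×ˢ (Set.univ : Set ℝ)))
    (hper : ∀ x ∈ closure Ω, ∀ t : ℝ, g (x, t + 1) = g (x, t)) :
    ∃ C, 0 ≤ C ∧ ∀ x ∈ closure Ω, ∀ t : ℝ, |g (x, t)| ≤ C := by
  obtain ⟨C, hC⟩ := (hK.prod isCompact_Icc).exists_bound_of_continuousOn
    (hc.mono (Set.prod_mono_right (Set.subset_univ _)))
  refine ⟨max C 0, le_max_right _ _, fun x hx t => ?_⟩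
  have hg : g (x, t) = g (x, Int.fract t) :=
    periodic_fract (f := fun s => g (x, s)) (fun s => hper x hx s) t
  rw [hg]
  calc |g (x, Int.fract t)| = ‖g (x, Int.fract t)‖ := (Real.norm_eq_abs _).symm
    _ ≤ C := hC (x, Int.fract t) ⟨hx, fract_mem_Icc t⟩
    _ ≤ max C 0 := le_max_left _ _

lemma mat_bound {Ω : Set X} (hK : IsCompact (closure Ω))
    {M : X → ℝ → Fin l → Fin l → ℝ}
    (hc : ∀ i j, ContinuousOn (fun p : X × ℝ => M p.1 p.2 i j) (closure Ω ×ˢ (Set.univ : Set ℝ)))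
    (hper : ∀ x ∈ closure Ω, ∀ (t : ℝ) (i j : Fin l), M x (t + 1) i j = M x t i j) :
    ∃ C, 0 ≤ C ∧ ∀ x ∈ closure Ω, ∀ (t : ℝ) (i j : Fin l), |M x t i j| ≤ C := by
  have h : ∀ p : Fin l × Fin l, ∃ C, 0 ≤ C ∧ ∀ x ∈ closure Ω, ∀ t : ℝ, |M x t p.1 p.2| ≤ C :=
    fun p => bound_per hK (hc p.1 p.2) (fun x hx t => hper x hx t p.1 p.2)
  choose C hC0 hC using h
  refine ⟨∑ p : Fin l × Fin l, C p, Finset.sum_nonneg (fun p _ => hC0 p), fun x hx t i j => ?_⟩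
  exact le_trans (hC (i, j) x hx t)
    (Finset.single_le_sum (fun p _ => hC0 p) (Finset.mem_univ (i, j)))

lemma k_bound {Ω : Set X} (hK : IsCompact (closure Ω))
    {k : Fin l → X → X → ℝ → ℝ} (hH3 : HypH3 k) :
    ∃ Ck, 0 ≤ Ck ∧ ∀ (i : Fin l), ∀ x ∈ closure Ω, ∀ y ∈ closure Ω, ∀ t : ℝ, k i x y t ≤ Ck := by
  have hcomp : IsCompact (closure Ω ×ˢ closure Ω ×ˢ Set.Icc (0:ℝ) 1) :=
    hK.prod (hK.prod isCompact_Icc)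
  have h : ∀ i : Fin l, ∃ C, 0 ≤ C ∧
      ∀ x ∈ closure Ω, ∀ y ∈ closure Ω, ∀ s ∈ Set.Icc (0:ℝ) 1, k i x y s ≤ C := by
    intro i
    obtain ⟨C, hC⟩ := hcomp.exists_bound_of_continuousOn (hH3.1 i).continuousOn
    refine ⟨max C 0, le_max_right _ _, fun x hx y hy s hs => ?_⟩
    have h1 := hC (x, y, s) ⟨hx, hy, hs⟩
    rw [Real.norm_eq_abs] at h1
    exact le_trans (le_trans (le_abs_self _) h1) (le_max_left _ _)
  choose C hC0 hC using h
  refine ⟨∑ i, C i, Finset.sum_nonneg (fun i _ => hC0 i), fun i x hx y hy t => ?_⟩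
  have hfr : k i x y t = k i x y (Int.fract t) :=
    periodic_fract (f := fun s => k i x y s) (fun s => hH3.2.2.2 i x y s) t
  rw [hfr]
  exact le_trans (hC i x hx y hy _ (fract_mem_Icc t))
    (Finset.single_le_sum (fun i _ => hC0 i) (Finset.mem_univ i))

lemma phi_bounds {Ω : Set X} (hΩne : Ω.Nonempty) (hK : IsCompact (closure Ω)) (hl : 1 ≤ l)
    {φ : X → ℝ → Fin l → ℝ} (hφ : MemX1pp Ω φ) :
    ∃ m M : ℝ, 0 < m ∧ ∀ x ∈ closure Ω, ∀ (t : ℝ) (i : Fin l), m ≤ φ x t i ∧ φ x t i ≤ M := by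
  haveI : Nonempty (Fin l) := Fin.pos_iff_nonempty.mp hl
  obtain ⟨x₀, hx₀⟩ := hΩne
  have hx₀c : x₀ ∈ closure Ω := subset_closure hx₀
  have hKne : (closure Ω ×ˢ Set.Icc (0:ℝ) 1).Nonempty := ⟨(x₀, 0), hx₀c, by norm_num⟩
  have hKc : IsCompact (closure Ω ×ˢ Set.Icc (0:ℝ) 1) := hK.prod isCompact_Icc
  have hup : ∀ i : Fin l, ∃ C, 0 ≤ C ∧ ∀ x ∈ closure Ω, ∀ t : ℝ, |φ x t i| ≤ C :=
    fun i => bound_per hK (hφ.1.1 i) (fun x hx t => hφ.1.2.2 x hx t i)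
  choose CM hCM0 hCM using hup
  have hlo : ∀ i : Fin l, ∃ mi, 0 < mi ∧ ∀ x ∈ closure Ω, ∀ t : ℝ, mi ≤ φ x t i := by
    intro i
    obtain ⟨p, hpK, hpmin⟩ := hKc.exists_isMinOn hKne
      ((hφ.1.1 i).mono (Set.prod_mono_right (Set.subset_univ _)))
    refine ⟨φ p.1 p.2 i, hφ.2 p.1 hpK.1 p.2 i, fun x hx t => ?_⟩
    have hfr : φ x t i = φ x (Int.fract t) i :=
      periodic_fract (f := fun s => φ x s i) (fun s => hφ.1.2.2 x hx s i) t
    rw [hfr]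
    exact isMinOn_iff.mp hpmin (x, Int.fract t) ⟨hx, fract_mem_Icc t⟩
  choose mi hmi0 hmi using hlo
  refine ⟨Finset.univ.inf' Finset.univ_nonempty mi, ∑ i, CM i, ?_, fun x hx t i => ⟨?_, ?_⟩⟩
  · exact (Finset.lt_inf'_iff _).mpr fun i _ => hmi0 i
  · exact le_trans (Finset.inf'_le _ (Finset.mem_univ i)) (hmi i x hx t)
  · exact le_trans (le_trans (le_abs_self _) (hCM i x hx t))
      (Finset.single_le_sum (fun i _ => hCM0 i) (Finset.mem_univ i))

lemma integrableOn_kphi {Ω : Set X} (hK : IsCompact (closure Ω))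
    {k : Fin l → X → X → ℝ → ℝ}
    (hkc : ∀ i, Continuous fun p : X × X × ℝ => k i p.1 p.2.1 p.2.2)
    {φ : X → ℝ → Fin l → ℝ}
    (hφc : ∀ i, ContinuousOn (fun p : X × ℝ => φ p.1 p.2 i) (closure Ω ×ˢ (Set.univ : Set ℝ)))
    (j : Fin l) (x : X) (t : ℝ) :
    IntegrableOn (fun y => k j x y t * φ y t j) Ω volume := by
  have h1 : ContinuousOn (fun y : X => k j x y t * φ y t j) (closure Ω) := by
    apply ContinuousOn.mul
    · exact ((hkc j).comp
        (continuous_const.prodMk (continuous_id.prodMk continuous_const))).continuousOn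
    · exact (hφc j).comp ((continuous_id.prodMk continuous_const).continuousOn)
        (fun y hy => ⟨hy, trivial⟩)
  exact (h1.integrableOn_compact hK).mono_set subset_closure

lemma psi_continuousOn {Ω : Set X} {φ : X → ℝ → Fin l → ℝ}
    (hφc : ∀ i, ContinuousOn (fun p : X × ℝ => φ p.1 p.2 i) (closure Ω ×ˢ (Set.univ : Set ℝ))) :
    ContinuousOn (fun p : X × ℝ => ∑ i, φ p.1 p.2 i) (closure Ω ×ˢ Set.Icc (0:ℝ) 1) :=
  (continuousOn_finset_sum Finset.univ (fun i _ => (hφc i))).mono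
    (Set.prod_mono_right (Set.subset_univ _))

lemma psi_deriv_sum {Ω : Set X} {φ : X → ℝ → Fin l → ℝ} (hφ : MemX1pp Ω φ)
    {x : X} (hx : x ∈ closure Ω) (t : ℝ) :
    deriv (fun s => ∑ i, φ x s i) t = ∑ i, deriv (fun s => φ x s i) t :=
  deriv_fun_sum (fun i _ => ((hφ.1.2.1 x hx i).differentiable one_ne_zero).differentiableAt)

lemma exists_max_point {Ω : Set X} (hΩne : Ω.Nonempty) (hK : IsCompact (closure Ω))
    {φ : X → ℝ → Fin l → ℝ} (hφ : MemX1pp Ω φ) :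
    ∃ xs ∈ closure Ω, ∃ ts ∈ Set.Icc (0:ℝ) 1,
      (∀ y ∈ closure Ω, ∀ s ∈ Set.Icc (0:ℝ) 1, (∑ i, φ y s i) ≤ ∑ i, φ xs ts i) ∧
      deriv (fun s => ∑ i, φ xs s i) ts = 0 := by
  obtain ⟨x₀, hx₀⟩ := hΩne
  have hKne : (closure Ω ×ˢ Set.Icc (0:ℝ) 1).Nonempty :=
    ⟨(x₀, 0), subset_closure hx₀, by norm_num⟩
  obtain ⟨p, hpK, hpmax⟩ := (hK.prod isCompact_Icc).exists_isMaxOn hKne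
    (psi_continuousOn (Ω := Ω) hφ.1.1)
  refine ⟨p.1, hpK.1, p.2, hpK.2, fun y hy s hs => isMaxOn_iff.mp hpmax (y, s) ⟨hy, hs⟩, ?_⟩
  have hglob : ∀ s : ℝ, (∑ i, φ p.1 s i) ≤ ∑ i, φ p.1 p.2 i := by
    intro s
    have hfr : (∑ i, φ p.1 s i) = ∑ i, φ p.1 (Int.fract s) i :=
      periodic_fract (f := fun u => ∑ i, φ p.1 u i)
        (fun u => Finset.sum_congr rfl fun i _ => hφ.1.2.2 p.1 hpK.1 u i) s
    rw [hfr]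
    exact isMaxOn_iff.mp hpmax (p.1, Int.fract s) ⟨hpK.1, fract_mem_Icc s⟩
  have hloc : IsLocalMax (fun s => ∑ i, φ p.1 s i) p.2 :=
    (isMaxOn_iff.mpr fun s _ => hglob s).isLocalMax Filter.univ_mem
  exact hloc.deriv_eq_zero

lemma exists_min_point {Ω : Set X} (hΩne : Ω.Nonempty) (hK : IsCompact (closure Ω))
    {φ : X → ℝ → Fin l → ℝ} (hφ : MemX1pp Ω φ) :
    ∃ xs ∈ closure Ω, ∃ ts ∈ Set.Icc (0:ℝ) 1,
      (∀ y ∈ closure Ω, ∀ s ∈ Set.Icc (0:ℝ) 1, (∑ i, φ xs ts i) ≤ ∑ i, φ y s i) ∧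
      deriv (fun s => ∑ i, φ xs s i) ts = 0 := by
  obtain ⟨x₀, hx₀⟩ := hΩne
  have hKne : (closure Ω ×ˢ Set.Icc (0:ℝ) 1).Nonempty :=
    ⟨(x₀, 0), subset_closure hx₀, by norm_num⟩
  obtain ⟨p, hpK, hpmin⟩ := (hK.prod isCompact_Icc).exists_isMinOn hKne
    (psi_continuousOn (Ω := Ω) hφ.1.1)
  refine ⟨p.1, hpK.1, p.2, hpK.2, fun y hy s hs => isMinOn_iff.mp hpmin (y, s) ⟨hy, hs⟩, ?_⟩
  have hglob : ∀ s : ℝ, (∑ i, φ p.1 p.2 i) ≤ ∑ i, φ p.1 s i := by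
    intro s
    have hfr : (∑ i, φ p.1 s i) = ∑ i, φ p.1 (Int.fract s) i :=
      periodic_fract (f := fun u => ∑ i, φ p.1 u i)
        (fun u => Finset.sum_congr rfl fun i _ => hφ.1.2.2 p.1 hpK.1 u i) s
    rw [hfr]
    exact isMinOn_iff.mp hpmin (p.1, Int.fract s) ⟨hpK.1, fract_mem_Icc s⟩
  have hloc : IsLocalMin (fun s => ∑ i, φ p.1 s i) p.2 :=
    (isMinOn_iff.mpr fun s _ => hglob s).isLocalMin Filter.univ_mem
  exact hloc.deriv_eq_zero

lemma double_sum_const (c : ℝ) :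
    (∑ _i : Fin l, ∑ _j : Fin l, c) = (l:ℝ) * ((l:ℝ) * c) := by
  simp [Finset.sum_const, Finset.card_univ, mul_assoc]

lemma sum_const_fin (c : ℝ) : (∑ _j : Fin l, c) = (l:ℝ) * c := by
  simp [Finset.sum_const, Finset.card_univ]

lemma Sset_bddAbove {Ω : Set X} (hΩne : Ω.Nonempty) (hΩo : IsOpen Ω)
    (hK : IsCompact (closure Ω)) (hl : 1 ≤ l) (τ : ℝ)
    {D B : X → ℝ → Fin l → Fin l → ℝ} {k : Fin l → X → X → ℝ → ℝ}
    (hH1 : HypH1 Ω D) (hH3 : HypH3 k)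
    {CD : ℝ} (hCD : ∀ x ∈ closure Ω, ∀ (t : ℝ) (i j : Fin l), |D x t i j| ≤ CD)
    {Ck : ℝ} (hCk0 : 0 ≤ Ck)
    (hCk : ∀ (i : Fin l), ∀ x ∈ closure Ω, ∀ y ∈ closure Ω, ∀ t : ℝ, k i x y t ≤ Ck)
    {CB : ℝ} (hCB : ∀ x ∈ closure Ω, ∀ (t : ℝ) (i j : Fin l), |B x t i j| ≤ CB) :
    BddAbove {lam : ℝ | ∃ φ, MemX1pp Ω φ ∧
      ∀ x ∈ closure Ω, ∀ (t : ℝ) (i : Fin l), lam * φ x t i ≤ Lop Ω τ D B k φ x t i} := by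
  haveI : Nonempty (Fin l) := Fin.pos_iff_nonempty.mp hl
  set vol : ℝ := (volume Ω).toReal with hvol
  have hvolfin : volume Ω < ⊤ :=
    lt_of_le_of_lt (measure_mono subset_closure) hK.measure_lt_top
  have hvol0 : 0 ≤ vol := ENNReal.toReal_nonneg
  refine ⟨(l:ℝ) * ((l:ℝ) * (CD * (vol * (Ck + (l:ℝ) * CB)))), ?_⟩
  rintro lam ⟨φ, hφ, hineq⟩
  obtain ⟨xs, hxs, ts, hts, hmax, hd0⟩ := exists_max_point hΩne hK hφ
  set ψs : ℝ := ∑ i, φ xs ts i with hψs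
  have hψspos : 0 < ψs :=
    Finset.sum_pos (fun i _ => hφ.2 xs hxs ts i) Finset.univ_nonempty
  have hφnn : ∀ y ∈ closure Ω, ∀ (t : ℝ) (j : Fin l), 0 ≤ φ y t j :=
    fun y hy t j => (hφ.2 y hy t j).le
  have hφleψ : ∀ y ∈ closure Ω, ∀ j : Fin l, φ y ts j ≤ ψs := fun y hy j =>
    le_trans (Finset.single_le_sum (fun i _ => hφnn y hy ts i) (Finset.mem_univ j))
      (hmax y hy ts hts)
  have hterm1 : (∑ i, -τ * deriv (fun s => φ xs s i) ts) = 0 := by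
    rw [← Finset.mul_sum, ← psi_deriv_sum hφ hxs ts, hd0, mul_zero]
  have i0 : Fin l := Classical.arbitrary _
  have hCD0 : 0 ≤ CD := le_trans (abs_nonneg _) (hCD xs hxs ts i0 i0)
  have hCB0 : 0 ≤ CB := le_trans (abs_nonneg _) (hCB xs hxs ts i0 i0)
  have hSub : ∀ i : Fin l, (∑ j₂, B xs ts i j₂ * φ xs ts j₂) ≤ (l:ℝ) * (CB * ψs) := by
    intro i
    calc (∑ j₂, B xs ts i j₂ * φ xs ts j₂) ≤ ∑ _j₂ : Fin l, CB * ψs := by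
          refine Finset.sum_le_sum fun j _ => ?_
          have hB := abs_le.mp (hCB xs hxs ts i j)
          have h1 := hφnn xs hxs ts j
          have h2 := hφleψ xs hxs j
          nlinarith
      _ = (l:ℝ) * (CB * ψs) := sum_const_fin _
  have hint_ub : ∀ i j : Fin l,
      (∫ y in Ω, (k j xs y ts * φ y ts j + ∑ j₂, B xs ts i j₂ * φ xs ts j₂))
        ≤ vol * (Ck * ψs + (l:ℝ) * (CB * ψs)) := by
    intro i j
    have hInt1 : IntegrableOn
        (fun y => k j xs y ts * φ y ts j + ∑ j₂, B xs ts i j₂ * φ xs ts j₂) Ω volume :=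
      (integrableOn_kphi hK hH3.1 hφ.1.1 j xs ts).add
        (integrableOn_const hvolfin.ne)
    have hmono : (∫ y in Ω, (k j xs y ts * φ y ts j + ∑ j₂, B xs ts i j₂ * φ xs ts j₂))
        ≤ ∫ _y in Ω, (Ck * ψs + (l:ℝ) * (CB * ψs)) := by
      refine setIntegral_mono_on hInt1 (integrableOn_const hvolfin.ne)
        hΩo.measurableSet (fun y hy => ?_)
      have hyc : y ∈ closure Ω := subset_closure hy
      have hk1 : k j xs y ts * φ y ts j ≤ Ck * ψs :=
        mul_le_mul (hCk j xs hxs y hyc ts) (hφleψ y hyc j) (hφnn y hyc ts j) hCk0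
      exact add_le_add hk1 (hSub i)
    rw [setIntegral_const, smul_eq_mul] at hmono
    exact hmono
  have hU0 : 0 ≤ vol * (Ck * ψs + (l:ℝ) * (CB * ψs)) := by
    have h1 : 0 ≤ Ck * ψs := mul_nonneg hCk0 hψspos.le
    have h2 : 0 ≤ (l:ℝ) * (CB * ψs) :=
      mul_nonneg (Nat.cast_nonneg l) (mul_nonneg hCB0 hψspos.le)
    exact mul_nonneg hvol0 (by linarith)
  have hterm2 : ∀ i j : Fin l,
      D xs ts i j * (∫ y in Ω, (k j xs y ts * φ y ts j + ∑ j₂, B xs ts i j₂ * φ xs ts j₂))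
        ≤ CD * (vol * (Ck * ψs + (l:ℝ) * (CB * ψs))) := by
    intro i j
    have hDnn := hH1.2.1 xs hxs ts i j
    have hDle := (abs_le.mp (hCD xs hxs ts i j)).2
    calc D xs ts i j * (∫ y in Ω, (k j xs y ts * φ y ts j + ∑ j₂, B xs ts i j₂ * φ xs ts j₂))
        ≤ D xs ts i j * (vol * (Ck * ψs + (l:ℝ) * (CB * ψs))) :=
          mul_le_mul_of_nonneg_left (hint_ub i j) hDnn
      _ ≤ CD * (vol * (Ck * ψs + (l:ℝ) * (CB * ψs))) :=
          mul_le_mul_of_nonneg_right hDle hU0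
  have hsum : lam * ψs ≤ ∑ i, Lop Ω τ D B k φ xs ts i := by
    rw [hψs, Finset.mul_sum]
    exact Finset.sum_le_sum fun i _ => hineq xs hxs ts i
  have hLop : (∑ i, Lop Ω τ D B k φ xs ts i)
      = (∑ i, -τ * deriv (fun s => φ xs s i) ts)
        + ∑ i : Fin l, ∑ j,
            D xs ts i j * ∫ y in Ω, (k j xs y ts * φ y ts j
              + ∑ j₂, B xs ts i j₂ * φ xs ts j₂) := by
    unfold Lop
    exact Finset.sum_add_distrib
  have h2 : (∑ i : Fin l, ∑ j,
      D xs ts i j * ∫ y in Ω, (k j xs y ts * φ y ts j + ∑ j₂, B xs ts i j₂ * φ xs ts j₂))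
      ≤ (l:ℝ) * ((l:ℝ) * (CD * (vol * (Ck * ψs + (l:ℝ) * (CB * ψs))))) := by
    rw [← double_sum_const]
    exact Finset.sum_le_sum fun i _ => Finset.sum_le_sum fun j _ => hterm2 i j
  have hfin : lam * ψs
      ≤ ((l:ℝ) * ((l:ℝ) * (CD * (vol * (Ck + (l:ℝ) * CB))))) * ψs := by
    rw [hLop, hterm1, zero_add] at hsum
    nlinarith
  exact le_of_mul_le_mul_right hfin hψspos

lemma Sset'_bddBelow {Ω : Set X} (hΩne : Ω.Nonempty) (hΩo : IsOpen Ω)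
    (hK : IsCompact (closure Ω)) (hl : 1 ≤ l) (τ : ℝ)
    {D B : X → ℝ → Fin l → Fin l → ℝ} {k : Fin l → X → X → ℝ → ℝ}
    (hH1 : HypH1 Ω D) (hH3 : HypH3 k)
    {CD : ℝ} (hCD : ∀ x ∈ closure Ω, ∀ (t : ℝ) (i j : Fin l), |D x t i j| ≤ CD)
    {CB : ℝ} (hCB : ∀ x ∈ closure Ω, ∀ (t : ℝ) (i j : Fin l), |B x t i j| ≤ CB) :
    BddBelow {lam : ℝ | ∃ φ, MemX1pp Ω φ ∧
      ∀ x ∈ closure Ω, ∀ (t : ℝ) (i : Fin l), Lop Ω τ D B k φ x t i ≤ lam * φ x t i} := by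
  haveI : Nonempty (Fin l) := Fin.pos_iff_nonempty.mp hl
  set vol : ℝ := (volume Ω).toReal with hvol
  have hvolfin : volume Ω < ⊤ :=
    lt_of_le_of_lt (measure_mono subset_closure) hK.measure_lt_top
  have hvol0 : 0 ≤ vol := ENNReal.toReal_nonneg
  refine ⟨-((l:ℝ) * ((l:ℝ) * (CD * (vol * ((l:ℝ) * CB))))), ?_⟩
  rintro lam ⟨φ, hφ, hineq⟩
  obtain ⟨xs, hxs, ts, hts, hmin, hd0⟩ := exists_min_point hΩne hK hφ
  set ψs : ℝ := ∑ i, φ xs ts i with hψs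
  have hψspos : 0 < ψs :=
    Finset.sum_pos (fun i _ => hφ.2 xs hxs ts i) Finset.univ_nonempty
  have hφnn : ∀ y ∈ closure Ω, ∀ (t : ℝ) (j : Fin l), 0 ≤ φ y t j :=
    fun y hy t j => (hφ.2 y hy t j).le
  have hφleψ : ∀ j : Fin l, φ xs ts j ≤ ψs := fun j =>
    Finset.single_le_sum (fun i _ => hφnn xs hxs ts i) (Finset.mem_univ j)
  have hterm1 : (∑ i, -τ * deriv (fun s => φ xs s i) ts) = 0 := by
    rw [← Finset.mul_sum, ← psi_deriv_sum hφ hxs ts, hd0, mul_zero]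
  have i0 : Fin l := Classical.arbitrary _
  have hCD0 : 0 ≤ CD := le_trans (abs_nonneg _) (hCD xs hxs ts i0 i0)
  have hCB0 : 0 ≤ CB := le_trans (abs_nonneg _) (hCB xs hxs ts i0 i0)
  have hSlb : ∀ i : Fin l, -((l:ℝ) * (CB * ψs)) ≤ ∑ j₂, B xs ts i j₂ * φ xs ts j₂ := by
    intro i
    calc -((l:ℝ) * (CB * ψs)) = ∑ _j₂ : Fin l, -(CB * ψs) := by
          rw [sum_const_fin]; ring
      _ ≤ ∑ j₂, B xs ts i j₂ * φ xs ts j₂ := by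
          refine Finset.sum_le_sum fun j _ => ?_
          have hB := abs_le.mp (hCB xs hxs ts i j)
          have h1 := hφnn xs hxs ts j
          have h2 := hφleψ j
          nlinarith
  have hint_lb : ∀ i j : Fin l,
      vol * (-((l:ℝ) * (CB * ψs)))
        ≤ ∫ y in Ω, (k j xs y ts * φ y ts j + ∑ j₂, B xs ts i j₂ * φ xs ts j₂) := by
    intro i j
    have hInt1 : IntegrableOn
        (fun y => k j xs y ts * φ y ts j + ∑ j₂, B xs ts i j₂ * φ xs ts j₂) Ω volume :=
      (integrableOn_kphi hK hH3.1 hφ.1.1 j xs ts).add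
        (integrableOn_const hvolfin.ne)
    have hmono : (∫ _y in Ω, -((l:ℝ) * (CB * ψs)))
        ≤ ∫ y in Ω, (k j xs y ts * φ y ts j + ∑ j₂, B xs ts i j₂ * φ xs ts j₂) := by
      refine setIntegral_mono_on (integrableOn_const hvolfin.ne) hInt1
        hΩo.measurableSet (fun y hy => ?_)
      have hyc : y ∈ closure Ω := subset_closure hy
      have hk1 : 0 ≤ k j xs y ts * φ y ts j :=
        mul_nonneg (hH3.2.1 j xs y ts) (hφnn y hyc ts j)
      linarith [hSlb i]
    rw [setIntegral_const, smul_eq_mul] at hmono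
    exact hmono
  have hL0 : vol * (-((l:ℝ) * (CB * ψs))) ≤ 0 := by
    have h2 : 0 ≤ (l:ℝ) * (CB * ψs) :=
      mul_nonneg (Nat.cast_nonneg l) (mul_nonneg hCB0 hψspos.le)
    nlinarith
  have hterm2 : ∀ i j : Fin l,
      CD * (vol * (-((l:ℝ) * (CB * ψs))))
        ≤ D xs ts i j * ∫ y in Ω, (k j xs y ts * φ y ts j
            + ∑ j₂, B xs ts i j₂ * φ xs ts j₂) := by
    intro i j
    have hDnn := hH1.2.1 xs hxs ts i j
    have hDle := (abs_le.mp (hCD xs hxs ts i j)).2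
    have h1 := hint_lb i j
    nlinarith [mul_le_mul_of_nonneg_left h1 hDnn,
      mul_nonneg (sub_nonneg.mpr hDle) (neg_nonneg.mpr hL0)]
  have hsum : (∑ i, Lop Ω τ D B k φ xs ts i) ≤ lam * ψs := by
    rw [hψs, Finset.mul_sum]
    exact Finset.sum_le_sum fun i _ => hineq xs hxs ts i
  have hLop : (∑ i, Lop Ω τ D B k φ xs ts i)
      = (∑ i, -τ * deriv (fun s => φ xs s i) ts)
        + ∑ i : Fin l, ∑ j,
            D xs ts i j * ∫ y in Ω, (k j xs y ts * φ y ts j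
              + ∑ j₂, B xs ts i j₂ * φ xs ts j₂) := by
    unfold Lop
    exact Finset.sum_add_distrib
  have h2 : (l:ℝ) * ((l:ℝ) * (CD * (vol * (-((l:ℝ) * (CB * ψs))))))
      ≤ ∑ i : Fin l, ∑ j,
          D xs ts i j * ∫ y in Ω, (k j xs y ts * φ y ts j
            + ∑ j₂, B xs ts i j₂ * φ xs ts j₂) := by
    rw [← double_sum_const]
    exact Finset.sum_le_sum fun i _ => Finset.sum_le_sum fun j _ => hterm2 i j
  have hfin : (-((l:ℝ) * ((l:ℝ) * (CD * (vol * ((l:ℝ) * CB)))))) * ψs ≤ lam * ψs := by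
    rw [hLop, hterm1, zero_add] at hsum
    nlinarith
  exact le_of_mul_le_mul_right hfin hψspos

lemma one_memX1pp {Ω : Set X} :
    MemX1pp (l := l) Ω (fun _ _ _ => (1:ℝ)) :=
  ⟨⟨fun _ => continuousOn_const, fun _ _ _ => contDiff_const, fun _ _ _ _ => rfl⟩,
    fun _ _ _ _ => one_pos⟩

lemma Lop_one_eq {Ω : Set X} (τ : ℝ)
    (D B : X → ℝ → Fin l → Fin l → ℝ) (k : Fin l → X → X → ℝ → ℝ)
    (x : X) (t : ℝ) (i : Fin l) :
    Lop Ω τ D B k (fun _ _ _ => (1:ℝ)) x t i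
      = ∑ j, D x t i j * ∫ y in Ω, (k j x y t * 1 + ∑ j₂, B x t i j₂ * 1) := by
  simp only [Lop, deriv_const', mul_zero, neg_zero, zero_add]

lemma Sset_nonempty {Ω : Set X} (hΩne : Ω.Nonempty) (hΩo : IsOpen Ω)
    (hK : IsCompact (closure Ω)) (hl : 1 ≤ l) (τ : ℝ)
    {D B : X → ℝ → Fin l → Fin l → ℝ} {k : Fin l → X → X → ℝ → ℝ}
    (hH1 : HypH1 Ω D) (hH3 : HypH3 k)
    {CD : ℝ} (hCD : ∀ x ∈ closure Ω, ∀ (t : ℝ) (i j : Fin l), |D x t i j| ≤ CD)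
    {CB : ℝ} (hCB : ∀ x ∈ closure Ω, ∀ (t : ℝ) (i j : Fin l), |B x t i j| ≤ CB) :
    Set.Nonempty {lam : ℝ | ∃ φ, MemX1pp Ω φ ∧
      ∀ x ∈ closure Ω, ∀ (t : ℝ) (i : Fin l), lam * φ x t i ≤ Lop Ω τ D B k φ x t i} := by
  haveI : Nonempty (Fin l) := Fin.pos_iff_nonempty.mp hl
  set vol : ℝ := (volume Ω).toReal with hvol
  have hvolfin : volume Ω < ⊤ :=
    lt_of_le_of_lt (measure_mono subset_closure) hK.measure_lt_top
  have hvol0 : 0 ≤ vol := ENNReal.toReal_nonneg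
  refine ⟨-((l:ℝ) * (CD * (vol * ((l:ℝ) * CB)))),
    (fun _ _ _ => (1:ℝ)), one_memX1pp, fun x hx t i => ?_⟩
  rw [Lop_one_eq, mul_one]
  have i0 : Fin l := Classical.arbitrary _
  have hCD0 : 0 ≤ CD := le_trans (abs_nonneg _) (hCD x hx t i0 i0)
  have hCB0 : 0 ≤ CB := le_trans (abs_nonneg _) (hCB x hx t i0 i0)
  have hSlb : -((l:ℝ) * CB) ≤ ∑ j₂, B x t i j₂ * (1:ℝ) := by
    calc -((l:ℝ) * CB) = ∑ _j₂ : Fin l, -CB := by rw [sum_const_fin]; ring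
      _ ≤ ∑ j₂, B x t i j₂ * (1:ℝ) := by
          refine Finset.sum_le_sum fun j _ => ?_
          have hB := abs_le.mp (hCB x hx t i j)
          rw [mul_one]; linarith [hB.1]
  have hint_lb : ∀ j : Fin l,
      vol * (-((l:ℝ) * CB)) ≤ ∫ y in Ω, (k j x y t * (1:ℝ) + ∑ j₂, B x t i j₂ * (1:ℝ)) := by
    intro j
    have hInt1 : IntegrableOn
        (fun y => k j x y t * (1:ℝ) + ∑ j₂, B x t i j₂ * (1:ℝ)) Ω volume :=
      (integrableOn_kphi (φ := fun _ _ _ => (1:ℝ)) hK hH3.1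
        (fun _ => continuousOn_const) j x t).add
        (integrableOn_const hvolfin.ne)
    have hmono : (∫ _y in Ω, -((l:ℝ) * CB))
        ≤ ∫ y in Ω, (k j x y t * (1:ℝ) + ∑ j₂, B x t i j₂ * (1:ℝ)) := by
      refine setIntegral_mono_on (integrableOn_const hvolfin.ne) hInt1
        hΩo.measurableSet (fun y _ => ?_)
      have hk1 : 0 ≤ k j x y t * (1:ℝ) := by simpa using hH3.2.1 j x y t
      linarith [hSlb]
    rw [setIntegral_const, smul_eq_mul] at hmono
    exact hmono
  have hL0 : vol * (-((l:ℝ) * CB)) ≤ 0 := by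
    have h2 : 0 ≤ (l:ℝ) * CB := mul_nonneg (Nat.cast_nonneg l) hCB0
    nlinarith
  have hterm : ∀ j : Fin l,
      CD * (vol * (-((l:ℝ) * CB)))
        ≤ D x t i j * ∫ y in Ω, (k j x y t * (1:ℝ) + ∑ j₂, B x t i j₂ * (1:ℝ)) := by
    intro j
    have hDnn := hH1.2.1 x hx t i j
    have hDle := (abs_le.mp (hCD x hx t i j)).2
    have h1 := hint_lb j
    nlinarith [mul_le_mul_of_nonneg_left h1 hDnn,
      mul_nonneg (sub_nonneg.mpr hDle) (neg_nonneg.mpr hL0)]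
  have h2 : (l:ℝ) * (CD * (vol * (-((l:ℝ) * CB))))
      ≤ ∑ j, D x t i j * ∫ y in Ω, (k j x y t * (1:ℝ) + ∑ j₂, B x t i j₂ * (1:ℝ)) := by
    rw [← sum_const_fin]
    exact Finset.sum_le_sum fun j _ => hterm j
  nlinarith [h2]

lemma Sset'_nonempty {Ω : Set X} (hΩne : Ω.Nonempty) (hΩo : IsOpen Ω)
    (hK : IsCompact (closure Ω)) (hl : 1 ≤ l) (τ : ℝ)
    {D B : X → ℝ → Fin l → Fin l → ℝ} {k : Fin l → X → X → ℝ → ℝ}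
    (hH1 : HypH1 Ω D) (hH3 : HypH3 k)
    {CD : ℝ} (hCD : ∀ x ∈ closure Ω, ∀ (t : ℝ) (i j : Fin l), |D x t i j| ≤ CD)
    {Ck : ℝ} (hCk0 : 0 ≤ Ck)
    (hCk : ∀ (i : Fin l), ∀ x ∈ closure Ω, ∀ y ∈ closure Ω, ∀ t : ℝ, k i x y t ≤ Ck)
    {CB : ℝ} (hCB : ∀ x ∈ closure Ω, ∀ (t : ℝ) (i j : Fin l), |B x t i j| ≤ CB) :
    Set.Nonempty {lam : ℝ | ∃ φ, MemX1pp Ω φ ∧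
      ∀ x ∈ closure Ω, ∀ (t : ℝ) (i : Fin l), Lop Ω τ D B k φ x t i ≤ lam * φ x t i} := by
  haveI : Nonempty (Fin l) := Fin.pos_iff_nonempty.mp hl
  set vol : ℝ := (volume Ω).toReal with hvol
  have hvolfin : volume Ω < ⊤ :=
    lt_of_le_of_lt (measure_mono subset_closure) hK.measure_lt_top
  have hvol0 : 0 ≤ vol := ENNReal.toReal_nonneg
  refine ⟨(l:ℝ) * (CD * (vol * (Ck + (l:ℝ) * CB))),
    (fun _ _ _ => (1:ℝ)), one_memX1pp, fun x hx t i => ?_⟩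
  rw [Lop_one_eq, mul_one]
  have i0 : Fin l := Classical.arbitrary _
  have hCD0 : 0 ≤ CD := le_trans (abs_nonneg _) (hCD x hx t i0 i0)
  have hCB0 : 0 ≤ CB := le_trans (abs_nonneg _) (hCB x hx t i0 i0)
  have hSub : (∑ j₂, B x t i j₂ * (1:ℝ)) ≤ (l:ℝ) * CB := by
    calc (∑ j₂, B x t i j₂ * (1:ℝ)) ≤ ∑ _j₂ : Fin l, CB := by
          refine Finset.sum_le_sum fun j _ => ?_
          have hB := abs_le.mp (hCB x hx t i j)
          rw [mul_one]; linarith [hB.2]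
      _ = (l:ℝ) * CB := sum_const_fin _
  have hint_ub : ∀ j : Fin l,
      (∫ y in Ω, (k j x y t * (1:ℝ) + ∑ j₂, B x t i j₂ * (1:ℝ)))
        ≤ vol * (Ck + (l:ℝ) * CB) := by
    intro j
    have hInt1 : IntegrableOn
        (fun y => k j x y t * (1:ℝ) + ∑ j₂, B x t i j₂ * (1:ℝ)) Ω volume :=
      (integrableOn_kphi (φ := fun _ _ _ => (1:ℝ)) hK hH3.1
        (fun _ => continuousOn_const) j x t).add
        (integrableOn_const hvolfin.ne)
    have hmono : (∫ y in Ω, (k j x y t * (1:ℝ) + ∑ j₂, B x t i j₂ * (1:ℝ)))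
        ≤ ∫ _y in Ω, (Ck + (l:ℝ) * CB) := by
      refine setIntegral_mono_on hInt1 (integrableOn_const hvolfin.ne)
        hΩo.measurableSet (fun y hy => ?_)
      have hyc : y ∈ closure Ω := subset_closure hy
      have hk1 : k j x y t * (1:ℝ) ≤ Ck := by simpa using hCk j x hx y hyc t
      linarith [hSub]
    rw [setIntegral_const, smul_eq_mul] at hmono
    exact hmono
  have hU0 : 0 ≤ vol * (Ck + (l:ℝ) * CB) := by
    have h2 : 0 ≤ (l:ℝ) * CB := mul_nonneg (Nat.cast_nonneg l) hCB0
    have := add_nonneg hCk0 h2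
    exact mul_nonneg hvol0 this
  have hterm : ∀ j : Fin l,
      D x t i j * (∫ y in Ω, (k j x y t * (1:ℝ) + ∑ j₂, B x t i j₂ * (1:ℝ)))
        ≤ CD * (vol * (Ck + (l:ℝ) * CB)) := by
    intro j
    have hDnn := hH1.2.1 x hx t i j
    have hDle := (abs_le.mp (hCD x hx t i j)).2
    calc D x t i j * (∫ y in Ω, (k j x y t * (1:ℝ) + ∑ j₂, B x t i j₂ * (1:ℝ)))
        ≤ D x t i j * (vol * (Ck + (l:ℝ) * CB)) :=
          mul_le_mul_of_nonneg_left (hint_ub j) hDnn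
      _ ≤ CD * (vol * (Ck + (l:ℝ) * CB)) := mul_le_mul_of_nonneg_right hDle hU0
  have h2 : (∑ j, D x t i j * ∫ y in Ω, (k j x y t * (1:ℝ) + ∑ j₂, B x t i j₂ * (1:ℝ)))
      ≤ (l:ℝ) * (CD * (vol * (Ck + (l:ℝ) * CB))) := by
    rw [← sum_const_fin]
    exact Finset.sum_le_sum fun j _ => hterm j
  exact h2

end Stmt8Aux

set_option maxHeartbeats 1000000 in
theorem stmt8 {N l : ℕ} (hN : 1 ≤ N) (hl : 1 ≤ l)
    (Ω : Set (EuclideanSpace ℝ (Fin N))) (hΩne : Ω.Nonempty) (hΩo : IsOpen Ω)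
    (hΩb : Bornology.IsBounded Ω) (τ : ℝ) (hτ : 0 < τ)
    (D A : EuclideanSpace ℝ (Fin N) → ℝ → Fin l → Fin l → ℝ)
    (k : Fin l → EuclideanSpace ℝ (Fin N) → EuclideanSpace ℝ (Fin N) → ℝ → ℝ)
    (hH1 : HypH1 Ω D) (hH2 : HypH2 Ω A) (hH3 : HypH3 k) :
    ∀ ε > (0:ℝ), ∃ δ > (0:ℝ), ∀ A' : EuclideanSpace ℝ (Fin N) → ℝ → Fin l → Fin l → ℝ,
      HypH2 Ω A' →
      (∀ x ∈ closure Ω, ∀ (t : ℝ) (i j : Fin l), |A' x t i j - A x t i j| ≤ δ) →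
      lamP Ω τ D A k - ε ≤ lamP Ω τ D A' k ∧ lamP' Ω τ D A' k ≤ lamP' Ω τ D A k + ε := by
  intro ε hε
  have hK : IsCompact (closure Ω) := hΩb.isCompact_closure
  haveI : Nonempty (Fin l) := Fin.pos_iff_nonempty.mp hl
  have hlR : (0:ℝ) < (l:ℝ) := by exact_mod_cast hl
  set vol : ℝ := (volume Ω).toReal with hvoldef
  have hvolfin : volume Ω < ⊤ :=
    lt_of_le_of_lt (measure_mono subset_closure) hK.measure_lt_top
  have hvol0 : 0 ≤ vol := ENNReal.toReal_nonneg
  obtain ⟨CA, hCA0, hCA⟩ := Stmt8Aux.mat_bound hK hH2.1 hH2.2.2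
  obtain ⟨CD, hCD0, hCD⟩ := Stmt8Aux.mat_bound hK hH1.1 hH1.2.2.2
  obtain ⟨Ck, hCk0, hCk⟩ := Stmt8Aux.k_bound hK hH3
  have hSAne := Stmt8Aux.Sset_nonempty hΩne hΩo hK hl τ hH1 hH3 hCD hCA
  have hSA'ne := Stmt8Aux.Sset'_nonempty hΩne hΩo hK hl τ hH1 hH3 hCD hCk0 hCk hCA
  -- pick λ₁ close to sSup
  have hlt1 : lamP Ω τ D A k - ε / 2 < lamP Ω τ D A k := sub_lt_self _ (by linarith)
  obtain ⟨lam1, hlam1mem, hlam1gt⟩ := exists_lt_of_lt_csSup hSAne hlt1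
  obtain ⟨φ, hφ, hφineq⟩ := hlam1mem
  obtain ⟨m, M, hm, hmM⟩ := Stmt8Aux.phi_bounds hΩne hK hl hφ
  -- pick λ₂ close to sInf
  have hlt2 : lamP' Ω τ D A k < lamP' Ω τ D A k + ε / 2 := lt_add_of_pos_right _ (by linarith)
  obtain ⟨lam2, hlam2mem, hlam2lt⟩ := exists_lt_of_csInf_lt hSA'ne hlt2
  obtain ⟨φ', hφ', hφ'ineq⟩ := hlam2mem
  obtain ⟨m', M', hm', hmM'⟩ := Stmt8Aux.phi_bounds hΩne hK hl hφ'
  -- positivity facts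
  obtain ⟨x₀, hx₀⟩ := id hΩne
  have hx₀c : x₀ ∈ closure Ω := subset_closure hx₀
  have i0 : Fin l := Classical.arbitrary _
  have hM0 : 0 < M := lt_of_lt_of_le hm (le_trans (hmM x₀ hx₀c 0 i0).1 (hmM x₀ hx₀c 0 i0).2)
  have hM'0 : 0 < M' :=
    lt_of_lt_of_le hm' (le_trans (hmM' x₀ hx₀c 0 i0).1 (hmM' x₀ hx₀c 0 i0).2)
  set K1 : ℝ := (l:ℝ) * (CD * (vol * ((l:ℝ) * M))) with hK1def
  set K2 : ℝ := (l:ℝ) * (CD * (vol * ((l:ℝ) * M'))) with hK2def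
  have hK10 : 0 ≤ K1 := mul_nonneg hlR.le
    (mul_nonneg hCD0 (mul_nonneg hvol0 (mul_nonneg hlR.le hM0.le)))
  have hK20 : 0 ≤ K2 := mul_nonneg hlR.le
    (mul_nonneg hCD0 (mul_nonneg hvol0 (mul_nonneg hlR.le hM'0.le)))
  set δ : ℝ := min (ε * m / (2 * (K1 + 1))) (ε * m' / (2 * (K2 + 1))) with hδdef
  have hδ : 0 < δ := by
    apply lt_min
    · exact div_pos (mul_pos hε hm) (by linarith)
    · exact div_pos (mul_pos hε hm') (by linarith)
  refine ⟨δ, hδ, fun A' hH2' hclose => ?_⟩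
  have hCA' : ∀ x ∈ closure Ω, ∀ (t : ℝ) (i j : Fin l), |A' x t i j| ≤ CA + δ := by
    intro x hx t i j
    calc |A' x t i j| = |(A' x t i j - A x t i j) + A x t i j| := by ring_nf
      _ ≤ |A' x t i j - A x t i j| + |A x t i j| := abs_add_le _ _
      _ ≤ δ + CA := add_le_add (hclose x hx t i j) (hCA x hx t i j)
      _ = CA + δ := add_comm _ _
  have hbddA' := Stmt8Aux.Sset_bddAbove hΩne hΩo hK hl τ hH1 hH3 hCD hCk0 hCk hCA'
  have hbddB' := Stmt8Aux.Sset'_bddBelow hΩne hΩo hK hl τ hH1 hH3 hCD hCA'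
  -- the splitting identity
  have hLopdiff : ∀ (ψ : EuclideanSpace ℝ (Fin N) → ℝ → Fin l → ℝ),
      (∀ i, ContinuousOn (fun p : EuclideanSpace ℝ (Fin N) × ℝ => ψ p.1 p.2 i)
        (closure Ω ×ˢ (Set.univ : Set ℝ))) →
      ∀ (x : EuclideanSpace ℝ (Fin N)) (t : ℝ) (i : Fin l),
      Lop Ω τ D A' k ψ x t i
        = Lop Ω τ D A k ψ x t i
          + (∑ j, D x t i j)
            * (vol * ((∑ j₂, A' x t i j₂ * ψ x t j₂) - ∑ j₂, A x t i j₂ * ψ x t j₂)) := by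
    intro ψ hψc x t i
    have hInt : ∀ j : Fin l, IntegrableOn (fun y => k j x y t * ψ y t j) Ω volume :=
      fun j => Stmt8Aux.integrableOn_kphi hK hH3.1 hψc j x t
    have hsplit : ∀ (B : EuclideanSpace ℝ (Fin N) → ℝ → Fin l → Fin l → ℝ) (j : Fin l),
        (∫ y in Ω, (k j x y t * ψ y t j + ∑ j₂, B x t i j₂ * ψ x t j₂))
          = (∫ y in Ω, k j x y t * ψ y t j) + vol * ∑ j₂, B x t i j₂ * ψ x t j₂ := by
      intro B j
      rw [integral_add (hInt j) (integrableOn_const hvolfin.ne),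
        setIntegral_const, smul_eq_mul, Measure.real]
    have hA'sum : (∑ j, D x t i j * ∫ y in Ω, (k j x y t * ψ y t j
          + ∑ j₂, A' x t i j₂ * ψ x t j₂))
        = ∑ j, D x t i j * ((∫ y in Ω, k j x y t * ψ y t j)
          + vol * ∑ j₂, A' x t i j₂ * ψ x t j₂) :=
      Finset.sum_congr rfl fun j _ => by rw [hsplit A' j]
    have hAsum : (∑ j, D x t i j * ∫ y in Ω, (k j x y t * ψ y t j
          + ∑ j₂, A x t i j₂ * ψ x t j₂))
        = ∑ j, D x t i j * ((∫ y in Ω, k j x y t * ψ y t j)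
          + vol * ∑ j₂, A x t i j₂ * ψ x t j₂) :=
      Finset.sum_congr rfl fun j _ => by rw [hsplit A j]
    unfold Lop
    rw [hA'sum, hAsum]
    simp only [mul_add, Finset.sum_add_distrib, ← Finset.sum_mul]
    ring
  -- key pointwise perturbation estimates
  have hpert_bound : ∀ (ψ : EuclideanSpace ℝ (Fin N) → ℝ → Fin l → Fin l → ℝ), True := fun _ => trivial
  have key1 : ∀ x ∈ closure Ω, ∀ (t : ℝ) (i : Fin l),
      (lam1 - ε / 2) * φ x t i ≤ Lop Ω τ D A' k φ x t i := by
    intro x hx t i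
    rw [hLopdiff φ hφ.1.1 x t i]
    set dS : ℝ := (∑ j₂, A' x t i j₂ * φ x t j₂) - ∑ j₂, A x t i j₂ * φ x t j₂ with hdS
    have hdS_lb : -(δ * ((l:ℝ) * M)) ≤ dS := by
      rw [hdS, ← Finset.sum_sub_distrib]
      calc -(δ * ((l:ℝ) * M)) = ∑ _j : Fin l, -(δ * M) := by
            rw [Stmt8Aux.sum_const_fin]; ring
        _ ≤ ∑ j₂, (A' x t i j₂ * φ x t j₂ - A x t i j₂ * φ x t j₂) := by
            refine Finset.sum_le_sum fun j _ => ?_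
            have h1 := abs_le.mp (hclose x hx t i j)
            have h2 := hmM x hx t j
            nlinarith [hm.le, h1.1, h1.2, h2.1, h2.2]
    have hdS_ub : dS ≤ δ * ((l:ℝ) * M) := by
      rw [hdS, ← Finset.sum_sub_distrib]
      calc (∑ j₂, (A' x t i j₂ * φ x t j₂ - A x t i j₂ * φ x t j₂))
          ≤ ∑ _j : Fin l, δ * M := by
            refine Finset.sum_le_sum fun j _ => ?_
            have h1 := abs_le.mp (hclose x hx t i j)
            have h2 := hmM x hx t j
            nlinarith [hm.le, h1.1, h1.2, h2.1, h2.2]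
        _ = δ * ((l:ℝ) * M) := by rw [Stmt8Aux.sum_const_fin]; ring
    have hsD0 : 0 ≤ ∑ j, D x t i j :=
      Finset.sum_nonneg fun j _ => hH1.2.1 x hx t i j
    have hsDle : (∑ j, D x t i j) ≤ (l:ℝ) * CD := by
      calc (∑ j, D x t i j) ≤ ∑ _j : Fin l, CD :=
            Finset.sum_le_sum fun j _ => (abs_le.mp (hCD x hx t i j)).2
        _ = (l:ℝ) * CD := Stmt8Aux.sum_const_fin _
    have hpert : -(δ * K1) ≤ (∑ j, D x t i j) * (vol * dS) := by
      have hq0 : 0 ≤ vol * (δ * ((l:ℝ) * M)) :=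
        mul_nonneg hvol0 (mul_nonneg hδ.le (mul_nonneg hlR.le hM0.le))
      have hq : vol * -(δ * ((l:ℝ) * M)) ≤ vol * dS :=
        mul_le_mul_of_nonneg_left hdS_lb hvol0
      have h1 : (∑ j, D x t i j) * (vol * -(δ * ((l:ℝ) * M)))
          ≤ (∑ j, D x t i j) * (vol * dS) := mul_le_mul_of_nonneg_left hq hsD0
      have h2 : (∑ j, D x t i j) * (vol * (δ * ((l:ℝ) * M)))
          ≤ ((l:ℝ) * CD) * (vol * (δ * ((l:ℝ) * M))) :=
        mul_le_mul_of_nonneg_right hsDle hq0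
      rw [hK1def]
      linarith
    have hδ1 : δ * K1 ≤ ε / 2 * m := by
      have hle : δ ≤ ε * m / (2 * (K1 + 1)) := min_le_left _ _
      have h1 : δ * (K1 + 1) ≤ ε * m / (2 * (K1 + 1)) * (K1 + 1) :=
        mul_le_mul_of_nonneg_right hle (by linarith)
      have h2 : ε * m / (2 * (K1 + 1)) * (K1 + 1) = ε * m / 2 := by
        field_simp
      rw [h2] at h1
      linarith [hδ.le]
    have hA := hφineq x hx t i
    have hφi := hmM x hx t i
    have hmφ : ε / 2 * m ≤ ε / 2 * φ x t i :=
      mul_le_mul_of_nonneg_left hφi.1 (by linarith : (0:ℝ) ≤ ε / 2)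
    clear_value dS δ K1 K2 vol
    nlinarith [hpert, hδ1, hmφ, hA]
  have key2 : ∀ x ∈ closure Ω, ∀ (t : ℝ) (i : Fin l),
      Lop Ω τ D A' k φ' x t i ≤ (lam2 + ε / 2) * φ' x t i := by
    intro x hx t i
    rw [hLopdiff φ' hφ'.1.1 x t i]
    set dS : ℝ := (∑ j₂, A' x t i j₂ * φ' x t j₂) - ∑ j₂, A x t i j₂ * φ' x t j₂ with hdS
    have hdS_lb : -(δ * ((l:ℝ) * M')) ≤ dS := by
      rw [hdS, ← Finset.sum_sub_distrib]
      calc -(δ * ((l:ℝ) * M')) = ∑ _j : Fin l, -(δ * M') := by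
            rw [Stmt8Aux.sum_const_fin]; ring
        _ ≤ ∑ j₂, (A' x t i j₂ * φ' x t j₂ - A x t i j₂ * φ' x t j₂) := by
            refine Finset.sum_le_sum fun j _ => ?_
            have h1 := abs_le.mp (hclose x hx t i j)
            have h2 := hmM' x hx t j
            nlinarith [hm'.le, h1.1, h1.2, h2.1, h2.2]
    have hdS_ub : dS ≤ δ * ((l:ℝ) * M') := by
      rw [hdS, ← Finset.sum_sub_distrib]
      calc (∑ j₂, (A' x t i j₂ * φ' x t j₂ - A x t i j₂ * φ' x t j₂))
          ≤ ∑ _j : Fin l, δ * M' := by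
            refine Finset.sum_le_sum fun j _ => ?_
            have h1 := abs_le.mp (hclose x hx t i j)
            have h2 := hmM' x hx t j
            nlinarith [hm'.le, h1.1, h1.2, h2.1, h2.2]
        _ = δ * ((l:ℝ) * M') := by rw [Stmt8Aux.sum_const_fin]; ring
    have hsD0 : 0 ≤ ∑ j, D x t i j :=
      Finset.sum_nonneg fun j _ => hH1.2.1 x hx t i j
    have hsDle : (∑ j, D x t i j) ≤ (l:ℝ) * CD := by
      calc (∑ j, D x t i j) ≤ ∑ _j : Fin l, CD :=
            Finset.sum_le_sum fun j _ => (abs_le.mp (hCD x hx t i j)).2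
        _ = (l:ℝ) * CD := Stmt8Aux.sum_const_fin _
    have hpert : (∑ j, D x t i j) * (vol * dS) ≤ δ * K2 := by
      have hq0 : 0 ≤ vol * (δ * ((l:ℝ) * M')) :=
        mul_nonneg hvol0 (mul_nonneg hδ.le (mul_nonneg hlR.le hM'0.le))
      have hq : vol * dS ≤ vol * (δ * ((l:ℝ) * M')) :=
        mul_le_mul_of_nonneg_left hdS_ub hvol0
      have h1 : (∑ j, D x t i j) * (vol * dS)
          ≤ (∑ j, D x t i j) * (vol * (δ * ((l:ℝ) * M'))) :=
        mul_le_mul_of_nonneg_left hq hsD0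
      have h2 : (∑ j, D x t i j) * (vol * (δ * ((l:ℝ) * M')))
          ≤ ((l:ℝ) * CD) * (vol * (δ * ((l:ℝ) * M'))) :=
        mul_le_mul_of_nonneg_right hsDle hq0
      rw [hK2def]
      linarith
    have hδ2 : δ * K2 ≤ ε / 2 * m' := by
      have hle : δ ≤ ε * m' / (2 * (K2 + 1)) := min_le_right _ _
      have h1 : δ * (K2 + 1) ≤ ε * m' / (2 * (K2 + 1)) * (K2 + 1) :=
        mul_le_mul_of_nonneg_right hle (by linarith)
      have h2 : ε * m' / (2 * (K2 + 1)) * (K2 + 1) = ε * m' / 2 := by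
        field_simp
      rw [h2] at h1
      linarith [hδ.le]
    have hA := hφ'ineq x hx t i
    have hφi := hmM' x hx t i
    have hmφ : ε / 2 * m' ≤ ε / 2 * φ' x t i :=
      mul_le_mul_of_nonneg_left hφi.1 (by linarith : (0:ℝ) ≤ ε / 2)
    clear_value dS δ K1 K2 vol
    nlinarith [hpert, hδ2, hmφ, hA]
  constructor
  · have hmem : (lam1 - ε / 2) ∈ {lam : ℝ | ∃ ψ, MemX1pp Ω ψ ∧
        ∀ x ∈ closure Ω, ∀ (t : ℝ) (i : Fin l), lam * ψ x t i ≤ Lop Ω τ D A' k ψ x t i} :=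
      ⟨φ, hφ, key1⟩
    have h : lam1 - ε / 2 ≤ lamP Ω τ D A' k := le_csSup hbddA' hmem
    linarith
  · have hmem : (lam2 + ε / 2) ∈ {lam : ℝ | ∃ ψ, MemX1pp Ω ψ ∧
        ∀ x ∈ closure Ω, ∀ (t : ℝ) (i : Fin l), Lop Ω τ D A' k ψ x t i ≤ lam * ψ x t i} :=
      ⟨φ', hφ', key2⟩
    have h : lamP' Ω τ D A' k ≤ lam2 + ε / 2 := csInf_le hbddB' hmem
    linarith
end
end

section
/- Assume (H1), (H̃2), (H3), and suppose there exist λ ∈ ℝ and φ ∈ 𝒳₁^{++} with L_{Ω,k,A}[φ](x,t) = λφ(x,t) for all (x,t) ∈ cl(Ω)×ℝ. Then there exists a constant C > 0 such that for every nonempty open subset Ω₁ ⊆ Ω, |λ_p(L_{Ω₁,k,A}) − λ_p(L_{Ω,k,A})| ≤ C·vol(Ω∖Ω₁), where vol denotes N-dimensional Lebesgue measure and L_{Ω₁,k,A} is the operator acting on functions on cl(Ω₁)×ℝ obtained by restricting D, A and the kernels and integrating over Ω₁. -/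
open MeasureTheory Filter Topology

noncomputable section

section AuxLemmas

/-- Extend a property of values of a 1-periodic function from `[0,1]` to all of `ℝ`. -/
lemma per_ext {f : ℝ → ℝ} (hp : ∀ t, f (t + 1) = f t) {P : ℝ → Prop}
    (h : ∀ s ∈ Set.Icc (0:ℝ) 1, P (f s)) (t : ℝ) : P (f t) := by
  have hper : Function.Periodic f 1 := hp
  obtain ⟨s, hs, hfs⟩ := hper.exists_mem_Ico₀ one_pos t
  rw [hfs]
  exact h s ⟨hs.1, hs.2.le⟩

/-- A finite family of continuous functions on a compact set is uniformly bounded. -/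
lemma bound_fam {α ι : Type*} [TopologicalSpace α] [Fintype ι] [Nonempty ι] {K : Set α}
    (hK : IsCompact K) (g : ι → α → ℝ) (hg : ∀ i, ContinuousOn (g i) K) :
    ∃ M : ℝ, 0 ≤ M ∧ ∀ p ∈ K, ∀ i, |g i p| ≤ M := by
  choose C hC using fun i => hK.exists_bound_of_continuousOn (hg i)
  refine ⟨max 0 (Finset.univ.sup' Finset.univ_nonempty C), le_max_left _ _, fun p hp i => ?_⟩
  calc |g i p| = ‖g i p‖ := (Real.norm_eq_abs _).symm
    _ ≤ C i := hC i p hp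
    _ ≤ _ := le_max_of_le_right (Finset.le_sup' C (Finset.mem_univ i))

/-- Integrability of the integrand appearing in the nonlocal operator. -/
lemma aux_intgr {N l : ℕ} (S : Set (EuclideanSpace ℝ (Fin N))) (hSb : Bornology.IsBounded S)
    (k : Fin l → EuclideanSpace ℝ (Fin N) → EuclideanSpace ℝ (Fin N) → ℝ → ℝ)
    (hk : ∀ i, Continuous fun p : EuclideanSpace ℝ (Fin N) × EuclideanSpace ℝ (Fin N) × ℝ =>
      k i p.1 p.2.1 p.2.2)
    (ψ : EuclideanSpace ℝ (Fin N) → ℝ → Fin l → ℝ)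
    (hψ : ∀ i, ContinuousOn (fun p : EuclideanSpace ℝ (Fin N) × ℝ => ψ p.1 p.2 i)
      (closure S ×ˢ (Set.univ : Set ℝ)))
    (j : Fin l) (x : EuclideanSpace ℝ (Fin N)) (t : ℝ) :
    MeasureTheory.IntegrableOn (fun y => k j x y t * ψ y t j) S := by
  have hc : ContinuousOn (fun y => k j x y t * ψ y t j) (closure S) := by
    apply ContinuousOn.mul
    · exact ((hk j).comp (continuous_const.prodMk
        (continuous_id.prodMk continuous_const))).continuousOn
    · exact (hψ j).comp (continuous_id.prodMk continuous_const).continuousOn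
        (fun y hy => ⟨hy, Set.mem_univ _⟩)
  exact (hc.integrableOn_compact hSb.isCompact_closure).mono_set subset_closure

end AuxLemmas

/-- Splitting a sum of weighted integrals over `s₁ ⊆ s` and over `s`. -/
lemma sum_int_diff {E : Type*} [MeasureTheory.MeasureSpace E] (s₁ s : Set E)
    (h1m : MeasurableSet s₁) (h1s : s₁ ⊆ s) {l : ℕ} (c : Fin l → ℝ) (F : Fin l → E → ℝ)
    (hF : ∀ j, MeasureTheory.IntegrableOn (F j) s) (a : ℝ) :
    (a + ∑ j, c j * ∫ y in s₁, F j y) - (a + ∑ j, c j * ∫ y in s, F j y)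
      = -∑ j, c j * ∫ y in s \ s₁, F j y := by
  have h : ∀ j ∈ Finset.univ, c j * (∫ y in s₁, F j y)
      = c j * (∫ y in s, F j y) - c j * (∫ y in s \ s₁, F j y) := by
    intro j _
    rw [MeasureTheory.integral_diff h1m (hF j) h1s]
    ring
  rw [Finset.sum_congr rfl h, Finset.sum_sub_distrib]
  ring

/-- The operator `Lop`, rewritten with explicit parenthesization (the `∫` notation in the
definition of `Lop` captures the trailing sum, so the `A`-term sits inside the integral). -/
lemma Lop_eq {N l : ℕ} (Ω : Set (EuclideanSpace ℝ (Fin N))) (τ : ℝ)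
    (D A : EuclideanSpace ℝ (Fin N) → ℝ → Fin l → Fin l → ℝ)
    (k : Fin l → EuclideanSpace ℝ (Fin N) → EuclideanSpace ℝ (Fin N) → ℝ → ℝ)
    (φ : EuclideanSpace ℝ (Fin N) → ℝ → Fin l → ℝ)
    (x : EuclideanSpace ℝ (Fin N)) (t : ℝ) (i : Fin l) :
    Lop Ω τ D A k φ x t i = -τ * deriv (fun s => φ x s i) t
      + ∑ j, D x t i j *
          (∫ y in Ω, (k j x y t * φ y t j + ∑ j', A x t i j' * φ x t j')) := rfl

/-- Key comparison: any `λ'` admissible for `λ_p(L_{Ω₁,k,A})` satisfies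
`λ' ≤ lam + ε / mφ` where `ε` controls how far the restriction of the positive eigenfunction
`φ` is from being a supersolution on `Ω₁`, and `mφ` is a positive lower bound for `φ`. -/
lemma comparison {N l : ℕ} (hl : 1 ≤ l)
    (Ω : Set (EuclideanSpace ℝ (Fin N))) (hΩb : Bornology.IsBounded Ω)
    (τ : ℝ) (hτ : 0 < τ)
    (D A : EuclideanSpace ℝ (Fin N) → ℝ → Fin l → Fin l → ℝ)
    (k : Fin l → EuclideanSpace ℝ (Fin N) → EuclideanSpace ℝ (Fin N) → ℝ → ℝ)
    (hH1 : HypH1 Ω D) (hH2 : HypH2 Ω A) (hH3 : HypH3 k)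
    (lam : ℝ) (φ : EuclideanSpace ℝ (Fin N) → ℝ → Fin l → ℝ) (hφ : MemX1pp Ω φ)
    (Ω₁ : Set (EuclideanSpace ℝ (Fin N))) (h1ne : Ω₁.Nonempty) (h1o : IsOpen Ω₁)
    (h1s : Ω₁ ⊆ Ω)
    (ε mφ : ℝ) (hε : 0 ≤ ε) (hmφ : 0 < mφ)
    (hmφle : ∀ x ∈ closure Ω, ∀ (t : ℝ) (i : Fin l), mφ ≤ φ x t i)
    (hLφ1 : ∀ x ∈ closure Ω₁, ∀ (t : ℝ) (i : Fin l),
      Lop Ω₁ τ D A k φ x t i ≤ lam * φ x t i + ε)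
    (lam' : ℝ) (ψ : EuclideanSpace ℝ (Fin N) → ℝ → Fin l → ℝ) (hψ : MemX1pp Ω₁ ψ)
    (hψineq : ∀ x ∈ closure Ω₁, ∀ (t : ℝ) (i : Fin l),
      lam' * ψ x t i ≤ Lop Ω₁ τ D A k ψ x t i) :
    lam' ≤ lam + ε / mφ := by
  obtain ⟨⟨hψc, hψd, hψp⟩, hψpos⟩ := hψ
  obtain ⟨⟨hφc, hφd, hφp⟩, hφpos⟩ := hφ
  obtain ⟨hDc, hD0, hDd, hDp⟩ := hH1
  obtain ⟨hAc, hA0, hAp⟩ := hH2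
  obtain ⟨hkc, hk0, hkpos, hkp⟩ := hH3
  have hsubcl : closure Ω₁ ⊆ closure Ω := closure_mono h1s
  have h1b : Bornology.IsBounded Ω₁ := hΩb.subset h1s
  have h1clc : IsCompact (closure Ω₁) := h1b.isCompact_closure
  have h1fin : volume Ω₁ < ⊤ := h1b.measure_lt_top
  obtain ⟨x₀, hx₀⟩ := h1ne
  have hKc : IsCompact (closure Ω₁ ×ˢ Set.Icc (0:ℝ) 1) := h1clc.prod isCompact_Icc
  have hKne : (closure Ω₁ ×ˢ Set.Icc (0:ℝ) 1).Nonempty :=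
    ⟨(x₀, 0), subset_closure hx₀, Set.mem_Icc.mpr ⟨le_rfl, zero_le_one⟩⟩
  -- the maximum of ψ/φ over cl(Ω₁) × [0,1], for each component
  have hmaxi : ∀ i : Fin l, ∃ p ∈ closure Ω₁ ×ˢ Set.Icc (0:ℝ) 1,
      ∀ q ∈ closure Ω₁ ×ˢ Set.Icc (0:ℝ) 1,
        ψ q.1 q.2 i / φ q.1 q.2 i ≤ ψ p.1 p.2 i / φ p.1 p.2 i := by
    intro i
    have hc : ContinuousOn (fun p : EuclideanSpace ℝ (Fin N) × ℝ => ψ p.1 p.2 i / φ p.1 p.2 i)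
        (closure Ω₁ ×ˢ Set.Icc (0:ℝ) 1) := by
      apply ContinuousOn.div
      · exact (hψc i).mono (Set.prod_mono subset_rfl (Set.subset_univ _))
      · exact (hφc i).mono (Set.prod_mono hsubcl (Set.subset_univ _))
      · exact fun p hp => (hφpos p.1 (hsubcl hp.1) p.2 i).ne'
    obtain ⟨p, hpK, hpmax⟩ := hKc.exists_isMaxOn hKne hc
    exact ⟨p, hpK, fun q hq => hpmax hq⟩
  choose p hpmem hpmax using hmaxi
  obtain ⟨istar, -, histar⟩ := Finset.exists_max_image (Finset.univ : Finset (Fin l))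
    (fun i => ψ (p i).1 (p i).2 i / φ (p i).1 (p i).2 i) ⟨⟨0, hl⟩, Finset.mem_univ _⟩
  set xs := (p istar).1 with hxs
  set ts := (p istar).2 with hts
  set θ := ψ xs ts istar / φ xs ts istar with hθdef
  have hxscl : xs ∈ closure Ω₁ := (hpmem istar).1
  have hxsclΩ : xs ∈ closure Ω := hsubcl hxscl
  have hφs : 0 < φ xs ts istar := hφpos _ hxsclΩ _ _
  have hψs : 0 < ψ xs ts istar := hψpos _ hxscl _ _
  have hθpos : 0 < θ := div_pos hψs hφs
  -- ψ ≤ θ φ on cl(Ω₁) × [0,1]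
  have hcomp0 : ∀ (i : Fin l), ∀ q ∈ closure Ω₁ ×ˢ Set.Icc (0:ℝ) 1,
      ψ q.1 q.2 i ≤ θ * φ q.1 q.2 i := by
    intro i q hq
    have h1 : ψ q.1 q.2 i / φ q.1 q.2 i ≤ θ :=
      le_trans (hpmax i q hq) (histar i (Finset.mem_univ i))
    have h2 : 0 < φ q.1 q.2 i := hφpos _ (hsubcl hq.1) _ _
    calc ψ q.1 q.2 i = (ψ q.1 q.2 i / φ q.1 q.2 i) * φ q.1 q.2 i :=
          (div_mul_cancel₀ _ h2.ne').symm
      _ ≤ θ * φ q.1 q.2 i := mul_le_mul_of_nonneg_right h1 h2.le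
  -- extend to all times by periodicity
  have hcomp : ∀ x ∈ closure Ω₁, ∀ (t : ℝ) (i : Fin l), ψ x t i ≤ θ * φ x t i := by
    intro x hx t i
    have hper : ∀ s : ℝ, (fun s => θ * φ x s i - ψ x s i) (s + 1)
        = (fun s => θ * φ x s i - ψ x s i) s := by
      intro s; simp only [hφp x (hsubcl hx) s i, hψp x hx s i]
    have := per_ext (P := fun z => 0 ≤ z) hper
      (fun s hs => sub_nonneg.mpr (hcomp0 i (x, s) ⟨hx, hs⟩)) t
    simpa using sub_nonneg.mp this
  -- equality at the maximum point
  have hstar_eq : ψ xs ts istar = θ * φ xs ts istar := by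
    rw [hθdef, div_mul_cancel₀ _ hφs.ne']
  -- derivative comparison at the maximum point
  have hψdiff : DifferentiableAt ℝ (fun s => ψ xs s istar) ts :=
    ((hψd xs hxscl istar).differentiable one_ne_zero).differentiableAt
  have hφdiff : DifferentiableAt ℝ (fun s => φ xs s istar) ts :=
    ((hφd xs hxsclΩ istar).differentiable one_ne_zero).differentiableAt
  have hloc : IsLocalMax (fun s => ψ xs s istar - θ * φ xs s istar) ts := by
    apply Filter.Eventually.of_forall
    intro s
    have h1 := hcomp xs hxscl s istar
    simp only
    rw [hstar_eq]
    linarith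
  have hder0 : deriv (fun s => ψ xs s istar - θ * φ xs s istar) ts = 0 := hloc.deriv_eq_zero
  have hderiv_eq : deriv (fun s => ψ xs s istar) ts
      = θ * deriv (fun s => φ xs s istar) ts := by
    have h1 : deriv (fun s => ψ xs s istar - θ * φ xs s istar) ts
        = deriv (fun s => ψ xs s istar) ts - θ * deriv (fun s => φ xs s istar) ts := by
      rw [deriv_fun_sub hψdiff (hφdiff.const_mul θ), deriv_const_mul θ hφdiff]
    rw [h1] at hder0
    linarith
  -- integrability
  have hIφΩ₁ : ∀ (j : Fin l) x (t : ℝ),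
      MeasureTheory.IntegrableOn (fun y => k j x y t * φ y t j) Ω₁ :=
    fun j x t => (aux_intgr Ω hΩb k hkc φ hφc j x t).mono_set h1s
  have hIψΩ₁ : ∀ (j : Fin l) x (t : ℝ),
      MeasureTheory.IntegrableOn (fun y => k j x y t * ψ y t j) Ω₁ :=
    fun j x t => aux_intgr Ω₁ h1b k hkc ψ hψc j x t
  -- pointwise comparison of the "A"-terms at the maximum point
  have hApt : ∑ j', A xs ts istar j' * ψ xs ts j'
      ≤ θ * ∑ j', A xs ts istar j' * φ xs ts j' := by
    have hj : ∀ j' ∈ (Finset.univ : Finset (Fin l)),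
        A xs ts istar j' * ψ xs ts j' ≤ A xs ts istar j' * (θ * φ xs ts j') := by
      intro j' _
      by_cases hje : j' = istar
      · subst hje
        rw [hstar_eq]
      · exact mul_le_mul_of_nonneg_left (hcomp xs hxscl ts j')
          (hA0 xs hxsclΩ ts istar j' (fun h => hje h.symm))
    calc ∑ j', A xs ts istar j' * ψ xs ts j'
        ≤ ∑ j', A xs ts istar j' * (θ * φ xs ts j') := Finset.sum_le_sum hj
      _ = θ * ∑ j', A xs ts istar j' * φ xs ts j' := by
          rw [Finset.mul_sum]; exact Finset.sum_congr rfl fun j' _ => by ring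
  -- the key chain of inequalities at the maximum point
  have hineq1 : lam' * ψ xs ts istar ≤ Lop Ω₁ τ D A k ψ xs ts istar :=
    hψineq xs hxscl ts istar
  have hLψ : Lop Ω₁ τ D A k ψ xs ts istar ≤ θ * Lop Ω₁ τ D A k φ xs ts istar := by
    have hterm1 : -τ * deriv (fun s => ψ xs s istar) ts
        = θ * (-τ * deriv (fun s => φ xs s istar) ts) := by
      rw [hderiv_eq]; ring
    have hterm2 : ∀ j : Fin l,
        D xs ts istar j *
          (∫ y in Ω₁, (k j xs y ts * ψ y ts j + ∑ j', A xs ts istar j' * ψ xs ts j'))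
        ≤ θ * (D xs ts istar j *
          (∫ y in Ω₁, (k j xs y ts * φ y ts j + ∑ j', A xs ts istar j' * φ xs ts j'))) := by
      intro j
      have hintψ : MeasureTheory.IntegrableOn
          (fun y => k j xs y ts * ψ y ts j + ∑ j', A xs ts istar j' * ψ xs ts j') Ω₁ :=
        (hIψΩ₁ j xs ts).add (MeasureTheory.integrableOn_const h1fin.ne)
      have hintφ : MeasureTheory.IntegrableOn
          (fun y => k j xs y ts * φ y ts j + ∑ j', A xs ts istar j' * φ xs ts j') Ω₁ :=
        (hIφΩ₁ j xs ts).add (MeasureTheory.integrableOn_const h1fin.ne)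
      have hint : (∫ y in Ω₁, (k j xs y ts * ψ y ts j + ∑ j', A xs ts istar j' * ψ xs ts j'))
          ≤ θ * ∫ y in Ω₁, (k j xs y ts * φ y ts j + ∑ j', A xs ts istar j' * φ xs ts j') := by
        rw [← integral_const_mul]
        apply setIntegral_mono_on hintψ (hintφ.const_mul θ) h1o.measurableSet
        intro y hy
        have h1 : k j xs y ts * ψ y ts j ≤ k j xs y ts * (θ * φ y ts j) :=
          mul_le_mul_of_nonneg_left (hcomp y (subset_closure hy) ts j) (hk0 j xs y ts)
        have h2 := hApt
        calc k j xs y ts * ψ y ts j + ∑ j', A xs ts istar j' * ψ xs ts j'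
            ≤ k j xs y ts * (θ * φ y ts j) + θ * ∑ j', A xs ts istar j' * φ xs ts j' :=
              add_le_add h1 h2
          _ = θ * (k j xs y ts * φ y ts j + ∑ j', A xs ts istar j' * φ xs ts j') := by ring
      have hD' : 0 ≤ D xs ts istar j := hD0 xs hxsclΩ ts istar j
      calc D xs ts istar j *
            (∫ y in Ω₁, (k j xs y ts * ψ y ts j + ∑ j', A xs ts istar j' * ψ xs ts j'))
          ≤ D xs ts istar j * (θ *
            ∫ y in Ω₁, (k j xs y ts * φ y ts j + ∑ j', A xs ts istar j' * φ xs ts j')) :=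
            mul_le_mul_of_nonneg_left hint hD'
        _ = θ * (D xs ts istar j *
            (∫ y in Ω₁, (k j xs y ts * φ y ts j + ∑ j', A xs ts istar j' * φ xs ts j'))) := by
            ring
    have hsum2 : ∑ j, D xs ts istar j *
          (∫ y in Ω₁, (k j xs y ts * ψ y ts j + ∑ j', A xs ts istar j' * ψ xs ts j'))
        ≤ θ * ∑ j, D xs ts istar j *
          (∫ y in Ω₁, (k j xs y ts * φ y ts j + ∑ j', A xs ts istar j' * φ xs ts j')) := by
      rw [Finset.mul_sum]
      exact Finset.sum_le_sum fun j _ => hterm2 j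
    rw [Lop_eq, Lop_eq]
    have hfin := add_le_add (le_of_eq hterm1) hsum2
    calc -τ * deriv (fun s => ψ xs s istar) ts
          + ∑ j, D xs ts istar j *
            (∫ y in Ω₁, (k j xs y ts * ψ y ts j + ∑ j', A xs ts istar j' * ψ xs ts j'))
        ≤ θ * (-τ * deriv (fun s => φ xs s istar) ts)
          + θ * ∑ j, D xs ts istar j *
            (∫ y in Ω₁, (k j xs y ts * φ y ts j + ∑ j', A xs ts istar j' * φ xs ts j')) := hfin
      _ = θ * (-τ * deriv (fun s => φ xs s istar) ts
          + ∑ j, D xs ts istar j *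
            (∫ y in Ω₁, (k j xs y ts * φ y ts j + ∑ j', A xs ts istar j' * φ xs ts j'))) := by
          ring
  have hLφ : Lop Ω₁ τ D A k φ xs ts istar ≤ lam * φ xs ts istar + ε :=
    hLφ1 xs hxscl ts istar
  -- conclude
  have hθle : θ ≤ ψ xs ts istar / mφ := by
    rw [le_div_iff₀ hmφ]
    calc θ * mφ ≤ θ * φ xs ts istar :=
          mul_le_mul_of_nonneg_left (hmφle xs hxsclΩ ts istar) hθpos.le
      _ = ψ xs ts istar := hstar_eq.symm
  have hchain : lam' * ψ xs ts istar ≤ (lam + ε / mφ) * ψ xs ts istar := by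
    have h2 : θ * Lop Ω₁ τ D A k φ xs ts istar ≤ θ * (lam * φ xs ts istar + ε) :=
      mul_le_mul_of_nonneg_left hLφ hθpos.le
    have h3 : θ * (lam * φ xs ts istar) = lam * ψ xs ts istar := by
      rw [hstar_eq]; ring
    have h4 : θ * ε ≤ (ψ xs ts istar / mφ) * ε := mul_le_mul_of_nonneg_right hθle hε
    have h5 : (ψ xs ts istar / mφ) * ε = (ε / mφ) * ψ xs ts istar := by ring
    have h6 : θ * (lam * φ xs ts istar + ε) = θ * (lam * φ xs ts istar) + θ * ε := by ring
    have h7 : (lam + ε / mφ) * ψ xs ts istar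
        = lam * ψ xs ts istar + (ε / mφ) * ψ xs ts istar := by ring
    linarith [hineq1, hLψ]
  exact (mul_le_mul_iff_left₀ hψs).mp hchain

theorem stmt9 {N l : ℕ} (hN : 1 ≤ N) (hl : 1 ≤ l)
    (Ω : Set (EuclideanSpace ℝ (Fin N))) (hΩne : Ω.Nonempty) (hΩo : IsOpen Ω)
    (hΩb : Bornology.IsBounded Ω) (τ : ℝ) (hτ : 0 < τ)
    (D A : EuclideanSpace ℝ (Fin N) → ℝ → Fin l → Fin l → ℝ)
    (k : Fin l → EuclideanSpace ℝ (Fin N) → EuclideanSpace ℝ (Fin N) → ℝ → ℝ)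
    (hH1 : HypH1 Ω D) (hH2 : HypH2 Ω A) (hH3 : HypH3 k)
    (hirr : Irred Ω D ∨ Irred Ω A)
    (lam : ℝ) (φ : EuclideanSpace ℝ (Fin N) → ℝ → Fin l → ℝ)
    (hφ : MemX1pp Ω φ)
    (hφeq : ∀ x ∈ closure Ω, ∀ (t : ℝ) (i : Fin l), Lop Ω τ D A k φ x t i = lam * φ x t i) :
    ∃ C > (0:ℝ), ∀ Ω₁ : Set (EuclideanSpace ℝ (Fin N)), Ω₁.Nonempty → IsOpen Ω₁ → Ω₁ ⊆ Ω →
      |lamP Ω₁ τ D A k - lamP Ω τ D A k| ≤ C * (volume (Ω \ Ω₁)).toReal := by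
  obtain ⟨⟨hφc, hφd, hφp⟩, hφpos⟩ := id hφ
  obtain ⟨hDc, hD0, hDd, hDp⟩ := id hH1
  obtain ⟨hAc, hA0, hAp⟩ := id hH2
  obtain ⟨hkc, hk0, hkpos, hkp⟩ := id hH3
  obtain ⟨x₀, hx₀⟩ := id hΩne
  have hlne : Nonempty (Fin l) := ⟨⟨0, hl⟩⟩
  have hclc : IsCompact (closure Ω) := hΩb.isCompact_closure
  have hKc : IsCompact (closure Ω ×ˢ Set.Icc (0:ℝ) 1) := hclc.prod isCompact_Icc
  have hKne : (closure Ω ×ˢ Set.Icc (0:ℝ) 1).Nonempty :=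
    ⟨(x₀, 0), subset_closure hx₀, Set.mem_Icc.mpr ⟨le_rfl, zero_le_one⟩⟩
  -- a positive lower bound for φ
  obtain ⟨m, hm0, hm⟩ : ∃ m : ℝ, 0 < m ∧
      ∀ x ∈ closure Ω, ∀ (t : ℝ) (i : Fin l), m ≤ φ x t i := by
    have hmin : ∀ i : Fin l, ∃ mi : ℝ, 0 < mi ∧
        ∀ q ∈ closure Ω ×ˢ Set.Icc (0:ℝ) 1, mi ≤ φ q.1 q.2 i := by
      intro i
      obtain ⟨q, hqK, hqmin⟩ := hKc.exists_isMinOn hKne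
        ((hφc i).mono (Set.prod_mono subset_rfl (Set.subset_univ _)))
      exact ⟨φ q.1 q.2 i, hφpos q.1 hqK.1 q.2 i, fun r hr => hqmin hr⟩
    choose mi hmi0 hmi using hmin
    refine ⟨Finset.univ.inf' Finset.univ_nonempty mi, ?_, ?_⟩
    · exact (Finset.lt_inf'_iff _).mpr fun i _ => hmi0 i
    · intro x hx t i
      refine per_ext (f := fun s => φ x s i) (P := fun z => Finset.univ.inf' Finset.univ_nonempty mi ≤ z)
        (fun s => hφp x hx s i) (fun s hs => ?_) t
      exact le_trans (Finset.inf'_le mi (Finset.mem_univ i)) (hmi i (x, s) ⟨hx, hs⟩)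
  -- uniform bounds for φ, D, A, k
  obtain ⟨Mφ, hMφ0, hMφ'⟩ := bound_fam (ι := Fin l) hKc (fun i q => φ q.1 q.2 i)
    (fun i => (hφc i).mono (Set.prod_mono subset_rfl (Set.subset_univ _)))
  have hMφ : ∀ x ∈ closure Ω, ∀ (t : ℝ) (i : Fin l), |φ x t i| ≤ Mφ := fun x hx t i =>
    per_ext (f := fun s => φ x s i) (P := fun z => |z| ≤ Mφ) (fun s => hφp x hx s i)
      (fun s hs => hMφ' (x, s) ⟨hx, hs⟩ i) t
  obtain ⟨MD, hMD0, hMD'⟩ := bound_fam (ι := Fin l × Fin l) hKc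
    (fun ij q => D q.1 q.2 ij.1 ij.2)
    (fun ij => (hDc ij.1 ij.2).mono (Set.prod_mono subset_rfl (Set.subset_univ _)))
  have hMD : ∀ x ∈ closure Ω, ∀ (t : ℝ) (i j : Fin l), |D x t i j| ≤ MD := fun x hx t i j =>
    per_ext (f := fun s => D x s i j) (P := fun z => |z| ≤ MD) (fun s => hDp x hx s i j)
      (fun s hs => hMD' (x, s) ⟨hx, hs⟩ (i, j)) t
  obtain ⟨MA, hMA0, hMA'⟩ := bound_fam (ι := Fin l × Fin l) hKc
    (fun ij q => A q.1 q.2 ij.1 ij.2)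
    (fun ij => (hAc ij.1 ij.2).mono (Set.prod_mono subset_rfl (Set.subset_univ _)))
  have hMA : ∀ x ∈ closure Ω, ∀ (t : ℝ) (i j : Fin l), |A x t i j| ≤ MA := fun x hx t i j =>
    per_ext (f := fun s => A x s i j) (P := fun z => |z| ≤ MA) (fun s => hAp x hx s i j)
      (fun s hs => hMA' (x, s) ⟨hx, hs⟩ (i, j)) t
  have hK2c : IsCompact (closure Ω ×ˢ (closure Ω ×ˢ Set.Icc (0:ℝ) 1)) :=
    hclc.prod (hclc.prod isCompact_Icc)
  obtain ⟨Mk, hMk0, hMk'⟩ := bound_fam (ι := Fin l) hK2c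
    (fun i q => k i q.1 q.2.1 q.2.2) (fun i => (hkc i).continuousOn)
  have hMk : ∀ x ∈ closure Ω, ∀ y ∈ closure Ω, ∀ (t : ℝ) (i : Fin l), |k i x y t| ≤ Mk :=
    fun x hx y hy t i => per_ext (f := fun s => k i x y s) (P := fun z => |z| ≤ Mk) (fun s => hkp i x y s)
      (fun s hs => hMk' (x, y, s) ⟨hx, hy, hs⟩ i) t
  -- the constants
  set M₂ : ℝ := Mk * Mφ + l * (MA * Mφ) with hM₂def
  have hM₂0 : 0 ≤ M₂ := by positivity
  set C₁ : ℝ := l * (MD * M₂) with hC₁def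
  have hC₁0 : 0 ≤ C₁ := by positivity
  have hC₁m : 0 ≤ C₁ / m := div_nonneg hC₁0 hm0.le
  set C : ℝ := C₁ / m + 1 with hCdef
  clear_value C
  have hC0 : 0 < C := by linarith
  -- integrability
  have hIφΩ : ∀ (j : Fin l) x (t : ℝ),
      MeasureTheory.IntegrableOn (fun y => k j x y t * φ y t j) Ω :=
    fun j x t => aux_intgr Ω hΩb k hkc φ hφc j x t
  have hΩfin : volume Ω < ⊤ := hΩb.measure_lt_top
  -- the key quantitative estimate
  have hkey : ∀ Ω₁ : Set (EuclideanSpace ℝ (Fin N)), IsOpen Ω₁ → Ω₁ ⊆ Ω →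
      ∀ x ∈ closure Ω₁, ∀ (t : ℝ) (i : Fin l),
      |Lop Ω₁ τ D A k φ x t i - lam * φ x t i| ≤ C₁ * (volume (Ω \ Ω₁)).toReal := by
    intro Ω₁ h1o h1s x hx t i
    have hxΩ : x ∈ closure Ω := closure_mono h1s hx
    have hdm : MeasurableSet (Ω \ Ω₁) := hΩo.measurableSet.diff h1o.measurableSet
    have hdfin : volume (Ω \ Ω₁) < ⊤ := (hΩb.subset Set.diff_subset).measure_lt_top
    have hg : ∀ j : Fin l, MeasureTheory.IntegrableOn
        (fun y => k j x y t * φ y t j + ∑ j', A x t i j' * φ x t j') Ω :=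
      fun j => (hIφΩ j x t).add (MeasureTheory.integrableOn_const hΩfin.ne)
    have habs : ∀ j : Fin l,
        |∫ y in Ω \ Ω₁, (k j x y t * φ y t j + ∑ j', A x t i j' * φ x t j')|
          ≤ M₂ * (volume (Ω \ Ω₁)).toReal := by
      intro j
      have hptw : ∀ y ∈ Ω \ Ω₁,
          ‖k j x y t * φ y t j + ∑ j', A x t i j' * φ x t j'‖ ≤ M₂ := by
        intro y hy
        have hyΩ : y ∈ closure Ω := subset_closure hy.1
        have h1 : |k j x y t * φ y t j| ≤ Mk * Mφ := by
          rw [abs_mul]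
          exact mul_le_mul (hMk x hxΩ y hyΩ t j) (hMφ y hyΩ t j) (abs_nonneg _) hMk0
        have h2 : |∑ j', A x t i j' * φ x t j'| ≤ (l : ℝ) * (MA * Mφ) := by
          calc |∑ j', A x t i j' * φ x t j'| ≤ ∑ j', |A x t i j' * φ x t j'| :=
                Finset.abs_sum_le_sum_abs _ _
            _ ≤ ∑ _j' : Fin l, MA * Mφ := Finset.sum_le_sum fun j' _ => by
                rw [abs_mul]
                exact mul_le_mul (hMA x hxΩ t i j') (hMφ x hxΩ t j') (abs_nonneg _) hMA0
            _ = (l : ℝ) * (MA * Mφ) := by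
                simp [Finset.sum_const, Finset.card_univ, nsmul_eq_mul]
        rw [Real.norm_eq_abs]
        calc |k j x y t * φ y t j + ∑ j', A x t i j' * φ x t j'|
            ≤ |k j x y t * φ y t j| + |∑ j', A x t i j' * φ x t j'| := abs_add_le _ _
          _ ≤ M₂ := by rw [hM₂def]; exact add_le_add h1 h2
      have hn := norm_setIntegral_le_of_norm_le_const (μ := volume) hdfin
        hptw
      rwa [Real.norm_eq_abs] at hn
    have heq' : Lop Ω₁ τ D A k φ x t i - Lop Ω τ D A k φ x t i
        = -∑ j, D x t i j * ∫ y in Ω \ Ω₁,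
            (k j x y t * φ y t j + ∑ j', A x t i j' * φ x t j') := by
      rw [Lop_eq, Lop_eq]
      exact sum_int_diff Ω₁ Ω h1o.measurableSet h1s _ _ hg _
    have heq2 : Lop Ω₁ τ D A k φ x t i - lam * φ x t i
        = -∑ j, D x t i j * ∫ y in Ω \ Ω₁,
            (k j x y t * φ y t j + ∑ j', A x t i j' * φ x t j') := by
      rw [← hφeq x hxΩ t i]; exact heq'
    rw [heq2, abs_neg]
    calc |∑ j, D x t i j * ∫ y in Ω \ Ω₁,
            (k j x y t * φ y t j + ∑ j', A x t i j' * φ x t j')|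
        ≤ ∑ j, |D x t i j * ∫ y in Ω \ Ω₁,
            (k j x y t * φ y t j + ∑ j', A x t i j' * φ x t j')| :=
          Finset.abs_sum_le_sum_abs _ _
      _ ≤ ∑ _j : Fin l, MD * (M₂ * (volume (Ω \ Ω₁)).toReal) :=
          Finset.sum_le_sum fun j _ => by
            rw [abs_mul]
            exact mul_le_mul (hMD x hxΩ t i j) (habs j) (abs_nonneg _) hMD0
      _ = C₁ * (volume (Ω \ Ω₁)).toReal := by
          simp only [Finset.sum_const, Finset.card_univ, Fintype.card_fin, nsmul_eq_mul,
            hC₁def]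
          ring
  -- now the main argument
  refine ⟨C, hC0, ?_⟩
  intro Ω₁ h1ne h1o h1s
  set v := (volume (Ω \ Ω₁)).toReal with hv
  have hv0 : 0 ≤ v := ENNReal.toReal_nonneg
  have hme : MemX1pp Ω₁ φ :=
    ⟨⟨fun i => (hφc i).mono (Set.prod_mono (closure_mono h1s) subset_rfl),
      fun x hx => hφd x (closure_mono h1s hx),
      fun x hx => hφp x (closure_mono h1s hx)⟩,
      fun x hx => hφpos x (closure_mono h1s hx)⟩
  have hLφ1 : ∀ x ∈ closure Ω₁, ∀ (t : ℝ) (i : Fin l),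
      Lop Ω₁ τ D A k φ x t i ≤ lam * φ x t i + C₁ * v := by
    intro x hx t i
    have h := (abs_le.mp (hkey Ω₁ h1o h1s x hx t i)).2
    linarith
  have hub : ∀ lam' ∈ {lam' : ℝ | ∃ ψ, MemX1pp Ω₁ ψ ∧ ∀ x ∈ closure Ω₁,
      ∀ (t : ℝ) (i : Fin l), lam' * ψ x t i ≤ Lop Ω₁ τ D A k ψ x t i},
      lam' ≤ lam + (C₁ * v) / m := by
    rintro lam' ⟨ψ, hψ, hψineq⟩
    exact comparison hl Ω hΩb τ hτ D A k hH1 hH2 hH3 lam φ hφ Ω₁ h1ne h1o h1s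
      (C₁ * v) m (mul_nonneg hC₁0 hv0) hm0 hm hLφ1 lam' ψ hψ hψineq
  have hmem1 : (lam - C * v) ∈ {lam' : ℝ | ∃ ψ, MemX1pp Ω₁ ψ ∧ ∀ x ∈ closure Ω₁,
      ∀ (t : ℝ) (i : Fin l), lam' * ψ x t i ≤ Lop Ω₁ τ D A k ψ x t i} := by
    refine ⟨φ, hme, fun x hx t i => ?_⟩
    have hk2 := (abs_le.mp (hkey Ω₁ h1o h1s x hx t i)).1
    have hφxm : m ≤ φ x t i := hm x (closure_mono h1s hx) t i
    have hCv : C₁ * v ≤ C * v * φ x t i := by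
      have e1 : C₁ * v = (C₁ / m) * v * m := by field_simp
      have e2 : (C₁ / m) * v ≤ C * v := by
        apply mul_le_mul_of_nonneg_right _ hv0
        linarith
      calc C₁ * v = (C₁ / m) * v * m := e1
        _ ≤ C * v * φ x t i :=
            mul_le_mul e2 hφxm hm0.le (mul_nonneg hC0.le hv0)
    have e3 : (lam - C * v) * φ x t i = lam * φ x t i - C * v * φ x t i := by ring
    linarith
  have hle1 : lamP Ω₁ τ D A k ≤ lam + (C₁ * v) / m := csSup_le ⟨_, hmem1⟩ hub
  have hge1 : lam - C * v ≤ lamP Ω₁ τ D A k := le_csSup ⟨lam + (C₁ * v) / m, hub⟩ hmem1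
  -- λ_p on the full domain equals lam
  have hLφΩ : ∀ x ∈ closure Ω, ∀ (t : ℝ) (i : Fin l),
      Lop Ω τ D A k φ x t i ≤ lam * φ x t i + 0 := by
    intro x hx t i
    rw [hφeq x hx t i]
    simp
  have hubΩ : ∀ lam' ∈ {lam' : ℝ | ∃ ψ, MemX1pp Ω ψ ∧ ∀ x ∈ closure Ω,
      ∀ (t : ℝ) (i : Fin l), lam' * ψ x t i ≤ Lop Ω τ D A k ψ x t i}, lam' ≤ lam := by
    rintro lam' ⟨ψ, hψ, hψineq⟩
    have h := comparison hl Ω hΩb τ hτ D A k hH1 hH2 hH3 lam φ hφ Ω hΩne hΩo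
      subset_rfl 0 m le_rfl hm0 hm hLφΩ lam' ψ hψ hψineq
    simpa using h
  have hmemΩ : lam ∈ {lam' : ℝ | ∃ ψ, MemX1pp Ω ψ ∧ ∀ x ∈ closure Ω,
      ∀ (t : ℝ) (i : Fin l), lam' * ψ x t i ≤ Lop Ω τ D A k ψ x t i} :=
    ⟨φ, hφ, fun x hx t i => (hφeq x hx t i).ge⟩
  have hΩeq : lamP Ω τ D A k = lam :=
    le_antisymm (csSup_le ⟨lam, hmemΩ⟩ hubΩ) (le_csSup ⟨lam, hubΩ⟩ hmemΩ)
  rw [hΩeq, abs_le]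
  have h1 : (C₁ * v) / m = (C₁ / m) * v := by ring
  have h2 : (C₁ / m) * v ≤ C * v := by
    apply mul_le_mul_of_nonneg_right _ hv0
    linarith
  constructor
  · linarith
  · linarith
end
end
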